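/- arXiv:1912.02933 — 3 statements merged into one kernel-verified Lean document; each statement's English description precedes it below -/
import Mathlib

section
/- If E[X_i² X | Y] = E[X|Y] E[X_i²|Y] + 2 E[X_i|Y](E[X_i X|Y] − E[X_i|Y]E[X|Y]) for all i = 1,…,M, then E[‖X‖₂² X | Y] − E[‖X‖₂² | Y] E[X|Y] = 2 Σ_{X|Y} E[X|Y], almost surely. -/
open MeasureTheory Matrix

noncomputable section

/-- Squared Euclidean norm of a vector in `ℝ^M`. -/
def sqn {M : ℕ} (v : Fin M → ℝ) : ℝ := ∑ i, v i ^ 2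

/-- Euclidean norm of a vector in `ℝ^M`. -/
def enorm2 {M : ℕ} (v : Fin M → ℝ) : ℝ := Real.sqrt (∑ i, v i ^ 2)

/-- Posterior covariance matrix `Σ_{X|Y} = E[(X − E[X|Y])(X − E[X|Y])ᵀ | Y]`, defined
entrywise, with `m` playing the role of `σ(Y)`. -/
def postCov {Ω : Type*} {m0 : MeasurableSpace Ω} (m : MeasurableSpace Ω) (μ : @Measure Ω m0)
    {M : ℕ} (X : Ω → Fin M → ℝ) : Ω → Matrix (Fin M) (Fin M) ℝ :=
  fun ω => Matrix.of fun i j =>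
    (μ[(fun ω' => (X ω' i - (μ[(fun ω'' => X ω'' i)|m]) ω') *
        (X ω' j - (μ[(fun ω'' => X ω'' j)|m]) ω'))|m]) ω

/-- Conditional expectation preserves membership in L². -/
lemma memLp_two_condexp {Ω : Type*} {m m0 : MeasurableSpace Ω} (hm : m ≤ m0)
    {μ : Measure Ω} [IsProbabilityMeasure μ] {f : Ω → ℝ} (hf : MemLp f 2 μ) :
    MemLp (μ[f|m]) 2 μ := by
  haveI : SigmaFinite (μ.trim hm) := inferInstance
  set F := hf.toLp f with hF
  have h1 : (condExpL2 ℝ ℝ hm F : Ω → ℝ) =ᵐ[μ] μ[f|m] := by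
    refine ae_eq_condExp_of_forall_setIntegral_eq hm (hf.integrable one_le_two) ?_ ?_ ?_
    · intro s _ _
      exact (Lp.memLp _).integrable one_le_two |>.integrableOn
    · intro s hs hμs
      rw [integral_condExpL2_eq hm F hs hμs.ne]
      exact setIntegral_congr_ae (hm s hs) (hf.coeFn_toLp.mono fun x hx _ => hx)
    · exact aestronglyMeasurable_condExpL2 hm F
  exact (Lp.memLp _).ae_eq h1

/-- Product of two L² functions is integrable. -/
lemma integrable_mul_of_memLp_two {Ω : Type*} {m0 : MeasurableSpace Ω}
    {μ : Measure Ω} {f g : Ω → ℝ} (hf : MemLp f 2 μ) (hg : MemLp g 2 μ) :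
    Integrable (fun ω => f ω * g ω) μ := by
  have h2 : Integrable (fun ω => (f ω ^ 2 + g ω ^ 2) / 2) μ :=
    ((hf.integrable_sq.add hg.integrable_sq).div_const 2)
  refine h2.mono' (hf.aestronglyMeasurable.mul hg.aestronglyMeasurable) ?_
  filter_upwards with ω
  rw [Real.norm_eq_abs, abs_mul]
  nlinarith [sq_nonneg (|f ω| - |g ω|), sq_abs (f ω), sq_abs (g ω), abs_nonneg (f ω), abs_nonneg (g ω)]

/-- If, for all `i = 1,…,M`,
`E[X_i² X|Y] = E[X|Y] E[X_i²|Y] + 2 E[X_i|Y](E[X_i X|Y] − E[X_i|Y] E[X|Y])` (a.s.,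
componentwise), then `E[‖X‖₂² X|Y] − E[‖X‖₂²|Y] E[X|Y] = 2 Σ_{X|Y} E[X|Y]` almost
surely (`m` plays the role of `σ(Y)`). -/
theorem stmt11 {Ω : Type*} (m : MeasurableSpace Ω) [m0 : MeasurableSpace Ω] (hm : m ≤ m0)
    (μ : Measure Ω) [IsProbabilityMeasure μ] {M : ℕ}
    (X : Ω → Fin M → ℝ)
    (hXmeas : ∀ i, AEMeasurable (fun ω => X ω i) μ)
    (hX3 : Integrable (fun ω => enorm2 (X ω) ^ 3) μ)
    (hiden : ∀ i j : Fin M,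
      (μ[(fun ω => X ω i ^ 2 * X ω j)|m]) =ᵐ[μ]
        fun ω => (μ[(fun ω' => X ω' j)|m]) ω * (μ[(fun ω' => X ω' i ^ 2)|m]) ω +
          2 * (μ[(fun ω' => X ω' i)|m]) ω *
            ((μ[(fun ω' => X ω' i * X ω' j)|m]) ω -
              (μ[(fun ω' => X ω' i)|m]) ω * (μ[(fun ω' => X ω' j)|m]) ω)) :
    ∀ j : Fin M,
      (fun ω => (μ[(fun ω' => sqn (X ω') * X ω' j)|m]) ω -
          (μ[(fun ω' => sqn (X ω'))|m]) ω * (μ[(fun ω' => X ω' j)|m]) ω) =ᵐ[μ]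
        fun ω => 2 * ((postCov m μ X ω).mulVec (fun i => (μ[(fun ω' => X ω' i)|m]) ω)) j := by
  haveI : SigmaFinite (μ.trim hm) := inferInstance
  -- basic pointwise bounds
  have he_nonneg : ∀ ω, 0 ≤ enorm2 (X ω) := fun ω => Real.sqrt_nonneg _
  have habs : ∀ ω i, |X ω i| ≤ enorm2 (X ω) := by
    intro ω i
    rw [← Real.sqrt_sq_eq_abs]
    exact Real.sqrt_le_sqrt (Finset.single_le_sum (f := fun i => X ω i ^ 2)
      (fun i _ => sq_nonneg _) (Finset.mem_univ i))
  have hsqn : ∀ ω, sqn (X ω) = enorm2 (X ω) ^ 2 := by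
    intro ω
    rw [enorm2, Real.sq_sqrt (Finset.sum_nonneg fun i _ => sq_nonneg _)]
    rfl
  have hdom : Integrable (fun ω => 1 + enorm2 (X ω) ^ 3) μ :=
    (integrable_const 1).add hX3
  -- integrabilities
  have hInt1 : ∀ i, Integrable (fun ω => X ω i) μ := by
    intro i
    refine hdom.mono' (hXmeas i).aestronglyMeasurable ?_
    filter_upwards with ω
    rw [Real.norm_eq_abs]
    nlinarith [habs ω i, he_nonneg ω, sq_nonneg (enorm2 (X ω) - 1), sq_nonneg (enorm2 (X ω))]
  have hIntSq : ∀ i, Integrable (fun ω => X ω i ^ 2) μ := by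
    intro i
    refine hdom.mono' (((hXmeas i).mul (hXmeas i)).congr (by filter_upwards with ω; simp only [Pi.mul_apply]; ring)).aestronglyMeasurable ?_
    filter_upwards with ω
    rw [Real.norm_eq_abs, abs_of_nonneg (sq_nonneg _)]
    have h := habs ω i
    have h2 : X ω i ^ 2 ≤ enorm2 (X ω) ^ 2 := by nlinarith [abs_nonneg (X ω i), sq_abs (X ω i)]
    nlinarith [he_nonneg ω, sq_nonneg (enorm2 (X ω) - 1)]
  have hMem2 : ∀ i, MemLp (fun ω => X ω i) 2 μ :=
    fun i => (memLp_two_iff_integrable_sq (hXmeas i).aestronglyMeasurable).2 (hIntSq i)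
  have hMemf : ∀ i, MemLp (μ[(fun ω' => X ω' i)|m]) 2 μ :=
    fun i => memLp_two_condexp hm (hMem2 i)
  have hIntXX : ∀ i j, Integrable (fun ω => X ω i * X ω j) μ :=
    fun i j => integrable_mul_of_memLp_two (hMem2 i) (hMem2 j)
  have hIntSqX : ∀ i j, Integrable (fun ω => X ω i ^ 2 * X ω j) μ := by
    intro i j
    refine hX3.mono' (((hXmeas i).mul ((hXmeas i).mul (hXmeas j))).congr
      (by filter_upwards with ω; simp only [Pi.mul_apply]; ring)).aestronglyMeasurable ?_
    filter_upwards with ω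
    rw [Real.norm_eq_abs, abs_mul, abs_of_nonneg (sq_nonneg _)]
    have h1 := habs ω i
    have h2 := habs ω j
    have h3 : X ω i ^ 2 ≤ enorm2 (X ω) ^ 2 := by nlinarith [abs_nonneg (X ω i), sq_abs (X ω i)]
    calc X ω i ^ 2 * |X ω j| ≤ enorm2 (X ω) ^ 2 * enorm2 (X ω) := by
          exact mul_le_mul h3 h2 (abs_nonneg _) (sq_nonneg _)
      _ = enorm2 (X ω) ^ 3 := by ring
  have hIntSqnX : ∀ j, Integrable (fun ω => sqn (X ω) * X ω j) μ := by
    intro j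
    have : (fun ω => sqn (X ω) * X ω j) = fun ω => ∑ i, X ω i ^ 2 * X ω j := by
      funext ω; rw [sqn, Finset.sum_mul]
    rw [this]
    exact integrable_finset_sum _ (fun i _ => hIntSqX i j)
  have hIntSqn : Integrable (fun ω => sqn (X ω)) μ := by
    have : (fun ω => sqn (X ω)) = fun ω => ∑ i, X ω i ^ 2 := by funext ω; rfl
    rw [this]
    exact integrable_finset_sum _ (fun i _ => hIntSq i)
  -- covariance identity
  have hcov : ∀ i j : Fin M,
      (μ[(fun ω' => (X ω' i - (μ[(fun ω'' => X ω'' i)|m]) ω') *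
        (X ω' j - (μ[(fun ω'' => X ω'' j)|m]) ω'))|m]) =ᵐ[μ]
      fun ω => (μ[(fun ω' => X ω' i * X ω' j)|m]) ω -
        (μ[(fun ω'' => X ω'' i)|m]) ω * (μ[(fun ω'' => X ω'' j)|m]) ω := by
    intro i j
    set fi := μ[(fun ω'' => X ω'' i)|m] with hfi
    set fj := μ[(fun ω'' => X ω'' j)|m] with hfj
    have hsm_i : StronglyMeasurable[m] fi := stronglyMeasurable_condExp
    have hsm_j : StronglyMeasurable[m] fj := stronglyMeasurable_condExp
    have hInt_fiXj : Integrable (fun ω => fi ω * X ω j) μ :=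
      integrable_mul_of_memLp_two (hMemf i) (hMem2 j)
    have hInt_fjXi : Integrable (fun ω => fj ω * X ω i) μ :=
      integrable_mul_of_memLp_two (hMemf j) (hMem2 i)
    have hInt_fifj : Integrable (fun ω => fi ω * fj ω) μ :=
      integrable_mul_of_memLp_two (hMemf i) (hMemf j)
    have hexpand : (fun ω' => (X ω' i - fi ω') * (X ω' j - fj ω')) =
        fun ω' => (X ω' i * X ω' j - fi ω' * X ω' j) -
          (fj ω' * X ω' i - fi ω' * fj ω') := by
      funext ω'; ring
    have h1 : μ[(fun ω' => (X ω' i - fi ω') * (X ω' j - fj ω'))|m] =ᵐ[μ]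
        μ[(fun ω' => X ω' i * X ω' j - fi ω' * X ω' j)|m] -
        μ[(fun ω' => fj ω' * X ω' i - fi ω' * fj ω')|m] := by
      rw [hexpand]
      exact condExp_sub ((hIntXX i j).sub hInt_fiXj) (hInt_fjXi.sub hInt_fifj) m
    have h2 : μ[(fun ω' => X ω' i * X ω' j - fi ω' * X ω' j)|m] =ᵐ[μ]
        μ[(fun ω' => X ω' i * X ω' j)|m] - μ[(fun ω' => fi ω' * X ω' j)|m] :=
      condExp_sub (hIntXX i j) hInt_fiXj m
    have h3 : μ[(fun ω' => fj ω' * X ω' i - fi ω' * fj ω')|m] =ᵐ[μ]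
        μ[(fun ω' => fj ω' * X ω' i)|m] - μ[(fun ω' => fi ω' * fj ω')|m] :=
      condExp_sub hInt_fjXi hInt_fifj m
    have h4 : μ[(fun ω' => fi ω' * X ω' j)|m] =ᵐ[μ] fun ω => fi ω * fj ω := by
      have := condExp_mul_of_stronglyMeasurable_left hsm_i (μ := μ)
        (g := fun ω => X ω j) hInt_fiXj (hInt1 j)
      filter_upwards [this] with ω hω
      exact hω
    have h5 : μ[(fun ω' => fj ω' * X ω' i)|m] =ᵐ[μ] fun ω => fj ω * fi ω := by
      have := condExp_mul_of_stronglyMeasurable_left hsm_j (μ := μ)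
        (g := fun ω => X ω i) hInt_fjXi (hInt1 i)
      filter_upwards [this] with ω hω
      exact hω
    have h6 : μ[(fun ω' => fi ω' * fj ω')|m] = fun ω => fi ω * fj ω :=
      condExp_of_stronglyMeasurable hm (hsm_i.mul hsm_j) hInt_fifj
    filter_upwards [h1, h2, h3, h4, h5] with ω g1 g2 g3 g4 g5
    have g6 : (μ[(fun ω' => fi ω' * fj ω')|m]) ω = fi ω * fj ω := by rw [h6]
    simp only [Pi.sub_apply] at g1 g2 g3
    rw [g1, g2, g3, g4, g5, g6]
    ring
  intro j
  -- condexp of sums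
  have hA : μ[(fun ω' => sqn (X ω') * X ω' j)|m] =ᵐ[μ]
      fun ω => ∑ i, (μ[(fun ω' => X ω' i ^ 2 * X ω' j)|m]) ω := by
    have heq : (fun ω' => sqn (X ω') * X ω' j) =
        ∑ i : Fin M, (fun ω' => X ω' i ^ 2 * X ω' j) := by
      funext ω'
      rw [Finset.sum_apply, sqn, Finset.sum_mul]
    rw [heq]
    filter_upwards [condExp_finsetSum (fun i _ => hIntSqX i j) (m := m)] with ω hω
    rw [hω, Finset.sum_apply]
  have hB : μ[(fun ω' => sqn (X ω'))|m] =ᵐ[μ]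
      fun ω => ∑ i, (μ[(fun ω' => X ω' i ^ 2)|m]) ω := by
    have heq : (fun ω' => sqn (X ω')) = ∑ i : Fin M, (fun ω' => X ω' i ^ 2) := by
      funext ω'
      rw [Finset.sum_apply, sqn]
    rw [heq]
    filter_upwards [condExp_finsetSum (fun i _ => hIntSq i) (m := m)] with ω hω
    rw [hω, Finset.sum_apply]
  have hcov' : ∀ᵐ ω ∂μ, ∀ i : Fin M,
      (μ[(fun ω' => (X ω' j - (μ[(fun ω'' => X ω'' j)|m]) ω') *
        (X ω' i - (μ[(fun ω'' => X ω'' i)|m]) ω'))|m]) ω =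
      (μ[(fun ω' => X ω' i * X ω' j)|m]) ω -
        (μ[(fun ω'' => X ω'' j)|m]) ω * (μ[(fun ω'' => X ω'' i)|m]) ω := by
    rw [ae_all_iff]
    intro i
    have hmc : (fun ω' => X ω' j * X ω' i) = (fun ω' => X ω' i * X ω' j) := by
      funext ω'; ring
    have := hcov j i
    rw [hmc] at this
    filter_upwards [this] with ω hω
    rw [hω]
  have hid' : ∀ᵐ ω ∂μ, ∀ i : Fin M,
      (μ[(fun ω' => X ω' i ^ 2 * X ω' j)|m]) ω =
        (μ[(fun ω' => X ω' j)|m]) ω * (μ[(fun ω' => X ω' i ^ 2)|m]) ω +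
          2 * (μ[(fun ω' => X ω' i)|m]) ω *
            ((μ[(fun ω' => X ω' i * X ω' j)|m]) ω -
              (μ[(fun ω' => X ω' i)|m]) ω * (μ[(fun ω' => X ω' j)|m]) ω) := by
    rw [ae_all_iff]
    exact fun i => hiden i j
  filter_upwards [hA, hB, hcov', hid'] with ω h1 h2 h3 h4
  simp only [Matrix.mulVec, dotProduct, postCov, Matrix.of_apply]
  rw [h1, h2, Finset.sum_mul, ← Finset.sum_sub_distrib, Finset.mul_sum]
  refine Finset.sum_congr rfl fun i _ => ?_
  rw [h4 i, h3 i]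
  ring
end
end

section
/- The map X̂ ↦ E[V_Y[‖X − X̂‖₂²]] = E[V_Y[‖X‖₂²]] + 4E[X̂ᵀΣ_{X|Y}X̂] − 4E[(E[‖X‖₂²X|Y] − E[‖X‖₂²|Y]E[X|Y])ᵀX̂] is a convex function on L²(σ(Y); R^M), being a sum of a constant, a nonnegative quadratic form, and a linear functional. -/
open MeasureTheory Matrix

noncomputable section

/-- Conditional (predictive) variance `V_Y[Z] = E[(Z − E[Z|Y])² | Y]`. -/
def condVar' {Ω : Type*} {m0 : MeasurableSpace Ω} (m : MeasurableSpace Ω) (μ : @Measure Ω m0)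
    (Z : Ω → ℝ) : Ω → ℝ :=
  μ[(fun ω => (Z ω - (μ[Z|m]) ω) ^ 2)|m]

namespace Stmt15Aux

lemma sqn_eq {M : ℕ} (v : Fin M → ℝ) : sqn v = enorm2 v ^ 2 := by
  rw [enorm2, Real.sq_sqrt (Finset.sum_nonneg fun i _ => sq_nonneg _)]; rfl

lemma sq_le_sqn {M : ℕ} (v : Fin M → ℝ) (i : Fin M) : v i ^ 2 ≤ sqn v :=
  Finset.single_le_sum (fun j _ => sq_nonneg (v j)) (Finset.mem_univ i)

lemma sqn_nonneg {M : ℕ} (v : Fin M → ℝ) : 0 ≤ sqn v :=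
  Finset.sum_nonneg fun i _ => sq_nonneg _

lemma sqn_le_bound {M : ℕ} (v : Fin M → ℝ) : sqn v ≤ 1 + enorm2 v ^ 3 := by
  have h0 : 0 ≤ enorm2 v := Real.sqrt_nonneg _
  rw [sqn_eq]; nlinarith [sq_nonneg (enorm2 v - 1)]

lemma dense_rat_vec (M : ℕ) : Dense (Set.range fun q : Fin M → ℚ => fun i => (q i : ℝ)) := by
  rw [Metric.dense_iff]
  intro x ε hε
  have hq : ∀ i : Fin M, ∃ q : ℚ, |x i - (q:ℝ)| < ε/2 := fun i =>
    exists_rat_near (x i) (by linarith)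
  choose q hqlt using hq
  refine ⟨fun i => (q i : ℝ), Metric.mem_ball.2 ?_, Set.mem_range_self q⟩
  rw [dist_pi_lt_iff hε]
  intro i
  rw [Real.dist_eq]
  calc |(q i:ℝ) - x i| = |x i - q i| := by rw [abs_sub_comm]
    _ < ε/2 := hqlt i
    _ < ε := by linarith

lemma continuous_quad {M : ℕ} (A : Matrix (Fin M) (Fin M) ℝ) :
    Continuous fun y : Fin M → ℝ => y ⬝ᵥ A.mulVec y := by
  simp only [dotProduct, Matrix.mulVec]
  exact continuous_finset_sum _ fun i _ => (continuous_apply i).mul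
    (continuous_finset_sum _ fun j _ => continuous_const.mul (continuous_apply j))

lemma quad_sum_le {M : ℕ} (A : Matrix (Fin M) (Fin M) ℝ)
    (h : ∀ z : Fin M → ℝ, 0 ≤ z ⬝ᵥ A.mulVec z) (x y : Fin M → ℝ) :
    (x + y) ⬝ᵥ A.mulVec (x + y) ≤ 2 * (x ⬝ᵥ A.mulVec x) + 2 * (y ⬝ᵥ A.mulVec y) := by
  have h1 := h (x - y)
  simp only [Matrix.add_mulVec, Matrix.sub_mulVec, Matrix.mulVec_add, Matrix.mulVec_sub,
    dotProduct_add, dotProduct_sub, add_dotProduct, sub_dotProduct] at *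
  linarith

lemma smul_quad {M : ℕ} (A : Matrix (Fin M) (Fin M) ℝ) (a : ℝ) (x : Fin M → ℝ) :
    (a • x) ⬝ᵥ A.mulVec (a • x) = a^2 * (x ⬝ᵥ A.mulVec x) := by
  rw [Matrix.mulVec_smul, smul_dotProduct, dotProduct_smul]
  simp only [smul_eq_mul]; ring

variable {Ω : Type*} {m : MeasurableSpace Ω} [m0 : MeasurableSpace Ω] {μ : Measure Ω} {M : ℕ}

lemma integrable_mul_of_memℒp_two {f g : Ω → ℝ} (hf : MemLp f 2 μ) (hg : MemLp g 2 μ) :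
    Integrable (fun ω => f ω * g ω) μ := by
  refine Integrable.mono (hf.integrable_sq.add hg.integrable_sq)
    (hf.aestronglyMeasurable.mul hg.aestronglyMeasurable) (Filter.Eventually.of_forall fun ω => ?_)
  simp only [Real.norm_eq_abs, Pi.add_apply]
  rw [abs_mul]
  nlinarith [sq_abs (f ω), sq_abs (g ω), sq_nonneg (|f ω| - |g ω|), sq_nonneg (f ω),
    sq_nonneg (g ω), le_abs_self (f ω ^ 2 + g ω ^ 2)]

lemma integral_mul_condexp (hm : m ≤ m0) [SigmaFinite (μ.trim hm)] {g f : Ω → ℝ}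
    (hg : StronglyMeasurable[m] g) (hgf : Integrable (fun ω => g ω * f ω) μ)
    (hf : Integrable f μ) :
    ∫ ω, g ω * (μ[f|m]) ω ∂μ = ∫ ω, g ω * f ω ∂μ := by
  have h1 : μ[g * f|m] =ᵐ[μ] g * μ[f|m] := condExp_mul_of_stronglyMeasurable_left hg hgf hf
  calc ∫ ω, g ω * (μ[f|m]) ω ∂μ = ∫ ω, (μ[g * f|m]) ω ∂μ := (integral_congr_ae h1).symm
    _ = ∫ ω, (g * f) ω ∂μ := integral_condExp hm
    _ = ∫ ω, g ω * f ω ∂μ := rfl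

/-- Conditional expectation of an L² function is L². -/
theorem memℒp_two_condexp (hm : m ≤ m0) [IsProbabilityMeasure μ] {f : Ω → ℝ}
    (hf : MemLp f 2 μ) : MemLp (μ[f|m]) 2 μ := by
  haveI : SigmaFinite (μ.trim hm) := by
    haveI : IsFiniteMeasure (μ.trim hm) := isFiniteMeasure_trim hm
    infer_instance
  set g : Lp ℝ 2 μ := (condExpL2 ℝ ℝ hm (hf.toLp f) : Lp ℝ 2 μ) with hg
  have hgm : AEStronglyMeasurable[m] (g : Ω → ℝ) μ := lpMeas.aestronglyMeasurable _
  have hgmem : MemLp (g : Ω → ℝ) 2 μ := Lp.memLp g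
  have h : (g : Ω → ℝ) =ᵐ[μ] μ[f|m] := by
    refine ae_eq_condExp_of_forall_setIntegral_eq hm (hf.integrable one_le_two)
      (fun s _ _ => (hgmem.integrable one_le_two).integrableOn)
      (fun s hs hμs => ?_) hgm
    rw [hg, integral_condExpL2_eq hm (hf.toLp f) hs hμs.ne]
    exact setIntegral_congr_ae (hm s hs) ((hf.coeFn_toLp).mono fun x hx _ => hx)
  exact hgmem.ae_eq h

/-- The centered coordinate process. -/
def B (m : MeasurableSpace Ω) (μ : @Measure Ω m0) (X : Ω → Fin M → ℝ) (i : Fin M) : Ω → ℝ :=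
  fun ω => X ω i - (μ[(fun ω'' => X ω'' i)|m]) ω

lemma postCov_apply (X : Ω → Fin M → ℝ) (ω : Ω) (i j : Fin M) :
    postCov m μ X ω i j = (μ[(fun ω' => B m μ X i ω' * B m μ X j ω')|m]) ω := rfl

section XFacts

variable [IsProbabilityMeasure μ] {X : Ω → Fin M → ℝ}
  (hXmeas : ∀ i, AEMeasurable (fun ω => X ω i) μ)
  (hX3 : Integrable (fun ω => enorm2 (X ω) ^ 3) μ)

include hXmeas hX3 in
lemma hXi2 (i : Fin M) : MemLp (fun ω => X ω i) 2 μ := by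
  rw [memLp_two_iff_integrable_sq (hXmeas i).aestronglyMeasurable]
  refine Integrable.mono ((integrable_const (1:ℝ)).add hX3)
    ((hXmeas i).pow_const 2).aestronglyMeasurable (Filter.Eventually.of_forall fun ω => ?_)
  have h1 : X ω i ^ 2 ≤ 1 + enorm2 (X ω) ^ 3 := (sq_le_sqn (X ω) i).trans (sqn_le_bound _)
  have h0 : 0 ≤ enorm2 (X ω) := Real.sqrt_nonneg _
  have h2 : (0:ℝ) ≤ 1 + enorm2 (X ω) ^ 3 := by positivity
  simp only [Real.norm_eq_abs, Pi.add_apply, abs_of_nonneg (sq_nonneg (X ω i)),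
    abs_of_nonneg h2]
  exact h1

include hXmeas hX3 in
lemma hXi1 (i : Fin M) : Integrable (fun ω => X ω i) μ :=
  (hXi2 hXmeas hX3 i).integrable one_le_two

include hXmeas in
omit [IsProbabilityMeasure μ] in
lemma sqnX_aesm : AEStronglyMeasurable (fun ω => sqn (X ω)) μ := by
  simp only [sqn]
  exact Finset.aestronglyMeasurable_fun_sum _ fun i _ =>
    ((hXmeas i).pow_const 2).aestronglyMeasurable

include hXmeas hX3 in
lemma sqnX_int : Integrable (fun ω => sqn (X ω)) μ := by
  refine Integrable.mono ((integrable_const (1:ℝ)).add hX3) (sqnX_aesm hXmeas)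
    (Filter.Eventually.of_forall fun ω => ?_)
  have h0 : 0 ≤ enorm2 (X ω) := Real.sqrt_nonneg _
  have h2 : (0:ℝ) ≤ 1 + enorm2 (X ω) ^ 3 := by positivity
  simp only [Real.norm_eq_abs, Pi.add_apply, abs_of_nonneg (sqn_nonneg (X ω)),
    abs_of_nonneg h2]
  exact sqn_le_bound _

include hXmeas hX3 in
lemma hB2 (hm : m ≤ m0) (i : Fin M) : MemLp (B m μ X i) 2 μ :=
  (hXi2 hXmeas hX3 i).sub (memℒp_two_condexp hm (hXi2 hXmeas hX3 i))

include hXmeas hX3 in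
lemma hBB_int (hm : m ≤ m0) (i j : Fin M) :
    Integrable (fun ω => B m μ X i ω * B m μ X j ω) μ :=
  integrable_mul_of_memℒp_two (hB2 hXmeas hX3 hm i) (hB2 hXmeas hX3 hm j)

include hXmeas hX3 in
lemma quad_eval (hm : m ≤ m0) (x : Fin M → ℝ) :
    ∀ᵐ ω ∂μ, x ⬝ᵥ (postCov m μ X ω).mulVec x
      = (μ[(fun ω' => (∑ i, x i * B m μ X i ω') ^ 2)|m]) ω := by
  have hint : ∀ p : Fin M × Fin M,
      Integrable (fun ω => (x p.1 * x p.2) • (B m μ X p.1 ω * B m μ X p.2 ω)) μ :=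
    fun p => (hBB_int hXmeas hX3 hm p.1 p.2).smul (x p.1 * x p.2)
  have hS_eq : (fun ω' => (∑ i, x i * B m μ X i ω') ^ 2)
      = ∑ p : Fin M × Fin M, (x p.1 * x p.2) • (fun ω => B m μ X p.1 ω * B m μ X p.2 ω) := by
    funext ω
    rw [Finset.sum_apply]
    simp only [Pi.smul_apply, smul_eq_mul]
    rw [sq, Finset.sum_mul_sum, Fintype.sum_prod_type]
    exact Finset.sum_congr rfl fun i _ => Finset.sum_congr rfl fun j _ => by ring
  have h1 : μ[(fun ω' => (∑ i, x i * B m μ X i ω') ^ 2)|m]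
      =ᵐ[μ] ∑ p : Fin M × Fin M, μ[(x p.1 * x p.2) •
        (fun ω => B m μ X p.1 ω * B m μ X p.2 ω)|m] := by
    rw [hS_eq]
    exact condExp_finsetSum (fun p _ => hint p) m
  have h2 : ∀ p : Fin M × Fin M,
      μ[(x p.1 * x p.2) • (fun ω => B m μ X p.1 ω * B m μ X p.2 ω)|m]
      =ᵐ[μ] (x p.1 * x p.2) • μ[(fun ω => B m μ X p.1 ω * B m μ X p.2 ω)|m] :=
    fun p => condExp_smul (x p.1 * x p.2) _ m
  filter_upwards [h1, ae_all_iff.2 h2] with ω hω1 hω2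
  rw [hω1, Finset.sum_apply]
  have hpt : x ⬝ᵥ (postCov m μ X ω).mulVec x
      = ∑ p : Fin M × Fin M, (x p.1 * x p.2) *
        (μ[(fun ω' => B m μ X p.1 ω' * B m μ X p.2 ω')|m]) ω := by
    simp only [dotProduct, Matrix.mulVec, postCov_apply]
    rw [Fintype.sum_prod_type]
    refine Finset.sum_congr rfl fun i _ => ?_
    rw [Finset.mul_sum]
    exact Finset.sum_congr rfl fun j _ => by ring
  rw [hpt]
  refine Finset.sum_congr rfl fun p _ => ?_
  rw [hω2 p]
  simp [smul_eq_mul]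

include hXmeas hX3 in
lemma postCov_psd (hm : m ≤ m0) :
    ∀ᵐ ω ∂μ, ∀ x : Fin M → ℝ, 0 ≤ x ⬝ᵥ (postCov m μ X ω).mulVec x := by
  have hkey : ∀ x : Fin M → ℝ, ∀ᵐ ω ∂μ, 0 ≤ x ⬝ᵥ (postCov m μ X ω).mulVec x := by
    intro x
    have hnn : 0 ≤ᵐ[μ] μ[(fun ω' => (∑ i, x i * B m μ X i ω') ^ 2)|m] :=
      condExp_nonneg (Filter.Eventually.of_forall fun ω => sq_nonneg _)
    filter_upwards [quad_eval hXmeas hX3 hm x, hnn] with ω h1 h2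
    rw [h1]; exact h2
  have hq : ∀ᵐ ω ∂μ, ∀ q : Fin M → ℚ,
      0 ≤ (fun i => (q i : ℝ)) ⬝ᵥ (postCov m μ X ω).mulVec (fun i => (q i : ℝ)) :=
    ae_all_iff.2 fun q => hkey _
  filter_upwards [hq] with ω hω x
  have hclosed : IsClosed {y : Fin M → ℝ | 0 ≤ y ⬝ᵥ (postCov m μ X ω).mulVec y} :=
    isClosed_le continuous_const (continuous_quad _)
  have hsub : Set.range (fun q : Fin M → ℚ => fun i => (q i : ℝ))
      ⊆ {y : Fin M → ℝ | 0 ≤ y ⬝ᵥ (postCov m μ X ω).mulVec y} := by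
    rintro _ ⟨q, rfl⟩; exact hω q
  have : (Set.univ : Set (Fin M → ℝ)) ⊆ {y | 0 ≤ y ⬝ᵥ (postCov m μ X ω).mulVec y} := by
    rw [← (dense_rat_vec M).closure_eq]
    exact hclosed.closure_subset_iff.2 hsub
  exact this (Set.mem_univ x)

include hXmeas hX3 in
lemma memL2_sumB (hm : m ≤ m0) {v : Ω → Fin M → ℝ}
    (hvsm : StronglyMeasurable[m] v)
    (hQ : Integrable (fun ω => v ω ⬝ᵥ (postCov m μ X ω).mulVec (v ω)) μ) :
    MemLp (fun ω => ∑ i, v ω i * B m μ X i ω) 2 μ := by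
  haveI : SigmaFinite (μ.trim hm) := by
    haveI : IsFiniteMeasure (μ.trim hm) := isFiniteMeasure_trim hm
    infer_instance
  set Qv : Ω → ℝ := fun ω => v ω ⬝ᵥ (postCov m μ X ω).mulVec (v ω) with hQv
  have hvism : ∀ i, StronglyMeasurable[m] fun ω => v ω i := fun i =>
    ((measurable_pi_apply i).comp hvsm.measurable).stronglyMeasurable
  have hvaesm : ∀ i, AEStronglyMeasurable (fun ω => v ω i) μ := fun i =>
    ((hvism i).mono hm).aestronglyMeasurable
  have hBaesm : ∀ i, AEStronglyMeasurable (B m μ X i) μ := fun i =>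
    (hB2 hXmeas hX3 hm i).aestronglyMeasurable
  have hsum_aesm : AEStronglyMeasurable (fun ω => ∑ i, v ω i * B m μ X i ω) μ :=
    Finset.aestronglyMeasurable_fun_sum _ fun i _ => (hvaesm i).mul (hBaesm i)
  have hsqnv_meas : Measurable[m] fun ω => sqn (v ω) := by
    simp only [sqn]
    exact Finset.measurable_sum _ fun i _ => ((hvism i).measurable).pow_const 2
  set sN : ℕ → Set Ω := fun n => {ω | sqn (v ω) ≤ (n:ℝ)} with hsN
  have hmsN : ∀ n, MeasurableSet[m] (sN n) :=
    fun n => measurableSet_le hsqnv_meas measurable_const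
  set vN : ℕ → Ω → Fin M → ℝ := fun n ω => if sqn (v ω) ≤ (n:ℝ) then v ω else 0 with hvNdef
  have hvNism : ∀ n i, StronglyMeasurable[m] fun ω => vN n ω i := by
    intro n i
    have : (fun ω => vN n ω i) = fun ω => if sqn (v ω) ≤ (n:ℝ) then v ω i else 0 := by
      funext ω; by_cases h : sqn (v ω) ≤ (n:ℝ) <;> simp [hvNdef, h]
    rw [this]
    exact (Measurable.ite (hmsN n) (hvism i).measurable measurable_const).stronglyMeasurable
  have hvNaesm : ∀ n i, AEStronglyMeasurable (fun ω => vN n ω i) μ := fun n i =>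
    ((hvNism n i).mono hm).aestronglyMeasurable
  have hbd : ∀ (n : ℕ) (ω : Ω) (i j : Fin M), |vN n ω i * vN n ω j| ≤ (n:ℝ) := by
    intro n ω i j
    by_cases h : sqn (v ω) ≤ (n:ℝ)
    · simp only [hvNdef, if_pos h]
      rw [abs_mul]
      nlinarith [sq_abs (v ω i), sq_abs (v ω j), sq_nonneg (|v ω i| - |v ω j|),
        sq_le_sqn (v ω) i, sq_le_sqn (v ω) j, abs_nonneg (v ω i), abs_nonneg (v ω j)]
    · simp only [hvNdef, if_neg h, Pi.zero_apply, mul_zero, zero_mul, abs_zero]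
      · positivity
  have hterm_int : ∀ (n : ℕ) (i j : Fin M),
      Integrable (fun ω => (vN n ω i * vN n ω j) * (B m μ X i ω * B m μ X j ω)) μ :=
    fun n i j => Integrable.bdd_mul (hBB_int hXmeas hX3 hm i j)
      ((hvNaesm n i).mul (hvNaesm n j))
      (Filter.Eventually.of_forall fun ω => by rw [Real.norm_eq_abs]; exact hbd n ω i j)
  have hterm_int2 : ∀ (n : ℕ) (i j : Fin M),
      Integrable (fun ω => (vN n ω i * vN n ω j) *
        (μ[(fun ω' => B m μ X i ω' * B m μ X j ω')|m]) ω) μ :=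
    fun n i j => Integrable.bdd_mul integrable_condExp
      ((hvNaesm n i).mul (hvNaesm n j))
      (Filter.Eventually.of_forall fun ω => by rw [Real.norm_eq_abs]; exact hbd n ω i j)
  have hsq_expand : ∀ (w b : Fin M → ℝ),
      (∑ i, w i * b i)^2 = ∑ i, ∑ j, (w i * w j) * (b i * b j) := by
    intro w b
    rw [sq, Finset.sum_mul_sum]
    exact Finset.sum_congr rfl fun i _ => Finset.sum_congr rfl fun j _ => by ring
  have hsqint : ∀ n, Integrable (fun ω => (∑ i, vN n ω i * B m μ X i ω)^2) μ := by
    intro n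
    have : (fun ω => (∑ i, vN n ω i * B m μ X i ω)^2)
        = fun ω => ∑ i, ∑ j, (vN n ω i * vN n ω j) * (B m μ X i ω * B m μ X j ω) := by
      funext ω; exact hsq_expand _ _
    rw [this]
    exact integrable_finset_sum _ fun i _ => integrable_finset_sum _ fun j _ => hterm_int n i j
  have hQabs_int : Integrable (fun ω => |Qv ω|) μ := hQ.abs
  have key : ∀ n, ∫ ω, (∑ i, vN n ω i * B m μ X i ω)^2 ∂μ ≤ ∫ ω, |Qv ω| ∂μ := by
    intro n
    have e1 : ∫ ω, (∑ i, vN n ω i * B m μ X i ω)^2 ∂μ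
        = ∑ i, ∑ j, ∫ ω, (vN n ω i * vN n ω j) * (B m μ X i ω * B m μ X j ω) ∂μ := by
      have : (fun ω => (∑ i, vN n ω i * B m μ X i ω)^2)
          = fun ω => ∑ i, ∑ j, (vN n ω i * vN n ω j) * (B m μ X i ω * B m μ X j ω) := by
        funext ω; exact hsq_expand _ _
      rw [this, integral_finset_sum _ fun i _ =>
        integrable_finset_sum _ fun j _ => hterm_int n i j]
      exact Finset.sum_congr rfl fun i _ => integral_finset_sum _ fun j _ => hterm_int n i j
    have e2 : ∀ i j, ∫ ω, (vN n ω i * vN n ω j) * (B m μ X i ω * B m μ X j ω) ∂μ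
        = ∫ ω, (vN n ω i * vN n ω j) *
            (μ[(fun ω' => B m μ X i ω' * B m μ X j ω')|m]) ω ∂μ := by
      intro i j
      exact (integral_mul_condexp hm ((hvNism n i).mul (hvNism n j))
        (hterm_int n i j) (hBB_int hXmeas hX3 hm i j)).symm
    have e3' : ∫ ω, (∑ i, ∑ j, (vN n ω i * vN n ω j) *
          (μ[(fun ω' => B m μ X i ω' * B m μ X j ω')|m]) ω) ∂μ
        = ∑ i, ∑ j, ∫ ω, (vN n ω i * vN n ω j) *
          (μ[(fun ω' => B m μ X i ω' * B m μ X j ω')|m]) ω ∂μ := by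
      rw [integral_finset_sum _ fun i _ =>
        integrable_finset_sum _ fun j _ => hterm_int2 n i j]
      exact Finset.sum_congr rfl fun i _ => integral_finset_sum _ fun j _ => hterm_int2 n i j
    have hpt : ∀ ω, (∑ i, ∑ j, (vN n ω i * vN n ω j) *
          (μ[(fun ω' => B m μ X i ω' * B m μ X j ω')|m]) ω)
        = Set.indicator (sN n) Qv ω := by
      intro ω
      by_cases h : ω ∈ sN n
      · have h' : sqn (v ω) ≤ (n:ℝ) := h
        rw [Set.indicator_of_mem h]
        have hv : vN n ω = v ω := by simp [hvNdef, if_pos h']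
        rw [hv]
        simp only [hQv, dotProduct, Matrix.mulVec, postCov_apply, Finset.mul_sum]
        exact Finset.sum_congr rfl fun i _ => Finset.sum_congr rfl fun j _ => by ring
      · have h' : ¬ sqn (v ω) ≤ (n:ℝ) := h
        rw [Set.indicator_of_notMem h]
        simp [hvNdef, if_neg h']
    have e3 : ∑ i, ∑ j, ∫ ω, (vN n ω i * vN n ω j) *
          (μ[(fun ω' => B m μ X i ω' * B m μ X j ω')|m]) ω ∂μ
        = ∫ ω, Set.indicator (sN n) Qv ω ∂μ := by
      rw [← e3']
      exact integral_congr_ae (Filter.Eventually.of_forall fun ω => hpt ω)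
    calc ∫ ω, (∑ i, vN n ω i * B m μ X i ω)^2 ∂μ
        = ∫ ω, Set.indicator (sN n) Qv ω ∂μ := by
          rw [e1]
          rw [Finset.sum_congr rfl fun i _ => Finset.sum_congr rfl fun j _ => e2 i j]
          exact e3
      _ ≤ ∫ ω, |Qv ω| ∂μ := by
          refine integral_mono (hQ.indicator (hm _ (hmsN n))) hQabs_int fun ω => ?_
          by_cases h : ω ∈ sN n
          · rw [Set.indicator_of_mem h]; exact le_abs_self _
          · rw [Set.indicator_of_notMem h]; exact abs_nonneg _
  -- monotone convergence
  set g : Ω → ENNReal := fun ω => ENNReal.ofReal ((∑ i, v ω i * B m μ X i ω)^2) with hgdef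
  set f : ℕ → Ω → ENNReal :=
    fun n ω => ENNReal.ofReal ((∑ i, vN n ω i * B m μ X i ω)^2) with hfdef
  have hf_ind : ∀ n ω, f n ω = Set.indicator (sN n) g ω := by
    intro n ω
    by_cases h : ω ∈ sN n
    · have h' : sqn (v ω) ≤ (n:ℝ) := h
      rw [Set.indicator_of_mem h]
      simp only [hfdef, hgdef, hvNdef, if_pos h']
    · have h' : ¬ sqn (v ω) ≤ (n:ℝ) := h
      rw [Set.indicator_of_notMem h]
      simp only [hfdef, hvNdef, if_neg h', Pi.zero_apply, zero_mul,
        Finset.sum_const_zero, ne_eq, OfNat.ofNat_ne_zero, not_false_eq_true, zero_pow,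
        ENNReal.ofReal_zero]
  have hmono : ∀ ω, Monotone fun n => f n ω := by
    intro ω a b hab
    show f a ω ≤ f b ω
    rw [hf_ind, hf_ind]
    by_cases h : ω ∈ sN a
    · have h' : ω ∈ sN b := by
        have : sqn (v ω) ≤ (a:ℝ) := h
        have : sqn (v ω) ≤ (b:ℝ) := this.trans (Nat.cast_le.2 hab)
        exact this
      rw [Set.indicator_of_mem h, Set.indicator_of_mem h']
    · rw [Set.indicator_of_notMem h]; exact zero_le
  have hsup : ∀ ω, ⨆ n, f n ω = g ω := by
    intro ω
    refine le_antisymm (iSup_le fun n => ?_) ?_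
    · rw [hf_ind]
      exact Set.indicator_le_self' (fun _ _ => zero_le) ω
    · have hmem : ω ∈ sN ⌈sqn (v ω)⌉₊ := by
        have : sqn (v ω) ≤ (⌈sqn (v ω)⌉₊ : ℝ) := Nat.le_ceil _
        exact this
      calc g ω = f ⌈sqn (v ω)⌉₊ ω := by rw [hf_ind, Set.indicator_of_mem hmem]
        _ ≤ ⨆ n, f n ω := le_iSup (fun n => f n ω) _
  have hfmeas : ∀ n, AEMeasurable (f n) μ := by
    intro n
    have : AEStronglyMeasurable (fun ω => (∑ i, vN n ω i * B m μ X i ω)^2) μ :=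
      ((Finset.aestronglyMeasurable_fun_sum _ fun i _ =>
        (hvNaesm n i).mul (hBaesm i)).aemeasurable.pow_const 2).aestronglyMeasurable
    exact ENNReal.measurable_ofReal.comp_aemeasurable this.aemeasurable
  have hlin : ∫⁻ ω, g ω ∂μ ≤ ENNReal.ofReal (∫ ω, |Qv ω| ∂μ) := by
    have h1 : ∫⁻ ω, g ω ∂μ = ⨆ n, ∫⁻ ω, f n ω ∂μ := by
      rw [← lintegral_iSup' hfmeas (Filter.Eventually.of_forall hmono)]
      exact lintegral_congr fun ω => (hsup ω).symm
    rw [h1]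
    refine iSup_le fun n => ?_
    rw [← ofReal_integral_eq_lintegral_ofReal (hsqint n)
      (Filter.Eventually.of_forall fun ω => sq_nonneg _)]
    exact ENNReal.ofReal_le_ofReal (key n)
  rw [memLp_two_iff_integrable_sq hsum_aesm]
  refine ⟨(hsum_aesm.aemeasurable.pow_const 2).aestronglyMeasurable, ?_⟩
  rw [hasFiniteIntegral_iff_ofReal (Filter.Eventually.of_forall fun ω => sq_nonneg _)]
  exact lt_of_le_of_lt hlin ENNReal.ofReal_lt_top

include hXmeas hX3 in
lemma resid_ae (hm : m ≤ m0) {v : Ω → Fin M → ℝ}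
    (hvsm : StronglyMeasurable[m] v) (hv2 : ∀ i, MemLp (fun ω => v ω i) 2 μ) :
    (fun ω => sqn (fun i => X ω i - v ω i)
        - (μ[(fun ω' => sqn (fun i => X ω' i - v ω' i))|m]) ω)
      =ᵐ[μ] fun ω => (sqn (X ω) - (μ[(fun ω' => sqn (X ω'))|m]) ω)
        - 2 * ∑ i, v ω i * B m μ X i ω := by
  haveI : SigmaFinite (μ.trim hm) := by
    haveI : IsFiniteMeasure (μ.trim hm) := isFiniteMeasure_trim hm
    infer_instance
  have hvism : ∀ i, StronglyMeasurable[m] fun ω => v ω i := fun i =>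
    ((measurable_pi_apply i).comp hvsm.measurable).stronglyMeasurable
  set Z : Ω → ℝ := fun ω => sqn (fun i => X ω i - v ω i) with hZdef
  set f1 : Ω → ℝ := fun ω => sqn (X ω) with hf1def
  set f2 : Ω → ℝ := fun ω => ∑ i, v ω i * X ω i with hf2def
  set f3 : Ω → ℝ := fun ω => sqn (v ω) with hf3def
  have hviX_int : ∀ i, Integrable (fun ω => v ω i * X ω i) μ := fun i =>
    integrable_mul_of_memℒp_two (hv2 i) (hXi2 hXmeas hX3 i)
  have hf1_int : Integrable f1 μ := sqnX_int hXmeas hX3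
  have hf2_int : Integrable f2 μ := integrable_finset_sum _ fun i _ => hviX_int i
  have hf3_int : Integrable f3 μ := by
    simp only [hf3def, sqn]
    exact integrable_finset_sum _ fun i _ => (hv2 i).integrable_sq
  have hf3_sm : StronglyMeasurable[m] f3 := by
    simp only [hf3def, sqn]
    exact (Finset.measurable_sum _ fun i _ =>
      ((hvism i).measurable).pow_const 2).stronglyMeasurable
  have hZeq : Z = (f1 - (2:ℝ) • f2) + f3 := by
    funext ω
    simp only [hZdef, hf1def, hf2def, hf3def, Pi.add_apply, Pi.sub_apply, Pi.smul_apply,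
      smul_eq_mul, sqn, Finset.mul_sum]
    rw [← Finset.sum_sub_distrib, ← Finset.sum_add_distrib]
    exact Finset.sum_congr rfl fun i _ => by ring
  have h12_int : Integrable (f1 - (2:ℝ) • f2) μ := hf1_int.sub (hf2_int.smul 2)
  have hc0 : μ[Z|m] =ᵐ[μ] μ[f1 - (2:ℝ) • f2|m] + μ[f3|m] := by
    rw [hZeq]; exact condExp_add h12_int hf3_int m
  have hc1 : μ[f1 - (2:ℝ) • f2|m] =ᵐ[μ] μ[f1|m] - μ[(2:ℝ) • f2|m] :=
    condExp_sub hf1_int (hf2_int.smul (2:ℝ)) m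
  have hc2 : μ[(2:ℝ) • f2|m] =ᵐ[μ] (2:ℝ) • μ[f2|m] := condExp_smul (2:ℝ) f2 m
  have hc3 : μ[f2|m] =ᵐ[μ] fun ω => ∑ i, v ω i * (μ[(fun ω'' => X ω'' i)|m]) ω := by
    have hsum : f2 = ∑ i, (fun ω => v ω i) * (fun ω => X ω i) := by
      funext ω; rw [Finset.sum_apply]; rfl
    rw [hsum]
    refine (condExp_finsetSum (fun i _ => hviX_int i) m).trans ?_
    have h2 : ∀ i : Fin M, μ[(fun ω => v ω i) * (fun ω => X ω i)|m]
        =ᵐ[μ] (fun ω => v ω i) * μ[(fun ω'' => X ω'' i)|m] := fun i =>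
      condExp_mul_of_stronglyMeasurable_left (hvism i) (hviX_int i) (hXi1 hXmeas hX3 i)
    filter_upwards [ae_all_iff.2 h2] with ω hω
    rw [Finset.sum_apply]
    exact Finset.sum_congr rfl fun i _ => (hω i).trans rfl
  have hc4 : μ[f3|m] = f3 := condExp_of_stronglyMeasurable hm hf3_sm hf3_int
  filter_upwards [hc0, hc1, hc2, hc3] with ω h0 h1 h2 h3
  have hcondZ : (μ[Z|m]) ω = (μ[f1|m]) ω
      - 2 * (∑ i, v ω i * (μ[(fun ω'' => X ω'' i)|m]) ω) + f3 ω := by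
    rw [h0]
    simp only [Pi.add_apply, Pi.sub_apply, hc4, h1, h2, Pi.smul_apply, smul_eq_mul, h3]
  have hZω : Z ω = f1 ω - 2 * f2 ω + f3 ω := by rw [hZeq]; rfl
  show Z ω - (μ[Z|m]) ω = (f1 ω - (μ[f1|m]) ω) - 2 * ∑ i, v ω i * B m μ X i ω
  rw [hcondZ, hZω]
  have hBsum : ∑ i, v ω i * B m μ X i ω
      = f2 ω - ∑ i, v ω i * (μ[(fun ω'' => X ω'' i)|m]) ω := by
    simp only [hf2def, B, mul_sub]
    rw [← Finset.sum_sub_distrib]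
  rw [hBsum]
  ring

include hXmeas hX3 in
lemma Fval (hm : m ≤ m0) {v : Ω → Fin M → ℝ}
    (hvsm : StronglyMeasurable[m] v) (hv2 : ∀ i, MemLp (fun ω => v ω i) 2 μ) :
    ∫ ω, condVar' m μ (fun ω' => sqn (fun i => X ω' i - v ω' i)) ω ∂μ
      = ∫ ω, ((sqn (X ω) - (μ[(fun ω' => sqn (X ω'))|m]) ω)
          - 2 * ∑ i, v ω i * B m μ X i ω)^2 ∂μ := by
  haveI : SigmaFinite (μ.trim hm) := by
    haveI : IsFiniteMeasure (μ.trim hm) := isFiniteMeasure_trim hm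
    infer_instance
  have h1 := resid_ae hXmeas hX3 hm hvsm hv2
  have h2 : (fun ω => ((fun ω' => sqn (fun i => X ω' i - v ω' i)) ω
        - (μ[(fun ω' => sqn (fun i => X ω' i - v ω' i))|m]) ω) ^ 2)
      =ᵐ[μ] fun ω => ((sqn (X ω) - (μ[(fun ω' => sqn (X ω'))|m]) ω)
        - 2 * ∑ i, v ω i * B m μ X i ω)^2 := by
    filter_upwards [h1] with ω hω
    rw [← hω]
  calc ∫ ω, condVar' m μ (fun ω' => sqn (fun i => X ω' i - v ω' i)) ω ∂μ
      = ∫ ω, (μ[(fun ω' => ((sqn (X ω') - (μ[(fun ω'' => sqn (X ω''))|m]) ω')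
          - 2 * ∑ i, v ω' i * B m μ X i ω')^2)|m]) ω ∂μ :=
        integral_congr_ae (condExp_congr_ae h2)
    _ = ∫ ω, ((sqn (X ω) - (μ[(fun ω' => sqn (X ω'))|m]) ω)
          - 2 * ∑ i, v ω i * B m μ X i ω)^2 ∂μ := integral_condExp hm

include hXmeas hX3 in
lemma quad_aesm (hm : m ≤ m0) {u : Ω → Fin M → ℝ}
    (hu : ∀ i, AEStronglyMeasurable (fun ω => u ω i) μ) :
    AEStronglyMeasurable (fun ω => u ω ⬝ᵥ (postCov m μ X ω).mulVec (u ω)) μ := by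
  simp only [dotProduct, Matrix.mulVec, postCov_apply]
  exact Finset.aestronglyMeasurable_fun_sum _ fun i _ => (hu i).mul
    (Finset.aestronglyMeasurable_fun_sum _ fun j _ =>
      ((stronglyMeasurable_condExp.mono hm).aestronglyMeasurable).mul (hu j))

end XFacts
end Stmt15Aux

/-- The map `X̂ ↦ E[V_Y[‖X − X̂‖₂²]]` is a convex function on the set of
`σ(Y)`-measurable square-integrable estimators with `E[X̂ᵀ Σ_{X|Y} X̂] < ∞` (being a sum
of a constant, a nonnegative quadratic form, and a linear functional); `m` plays the
role of `σ(Y)`. -/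
theorem stmt15 {Ω : Type*} (m : MeasurableSpace Ω) [m0 : MeasurableSpace Ω] (hm : m ≤ m0)
    (μ : Measure Ω) [IsProbabilityMeasure μ] {M : ℕ}
    (X : Ω → Fin M → ℝ)
    (hXmeas : ∀ i, AEMeasurable (fun ω => X ω i) μ)
    (hX3 : Integrable (fun ω => enorm2 (X ω) ^ 3) μ)
    (hmom : MemLp (μ[(fun ω => enorm2 (X ω) ^ 3)|m]) 2 μ) :
    ConvexOn ℝ
      {Xhat : Ω → Fin M → ℝ |
        StronglyMeasurable[m] Xhat ∧
        (∀ i, MemLp (fun ω => Xhat ω i) 2 μ) ∧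
        Integrable (fun ω => Xhat ω ⬝ᵥ (postCov m μ X ω).mulVec (Xhat ω)) μ}
      (fun Xhat =>
        ∫ ω, condVar' m μ (fun ω' => sqn (fun i => X ω' i - Xhat ω' i)) ω ∂μ) := by
  classical
  haveI : SigmaFinite (μ.trim hm) := by
    haveI : IsFiniteMeasure (μ.trim hm) := isFiniteMeasure_trim hm
    infer_instance
  constructor
  · -- convexity of the domain
    rintro v₁ ⟨h1sm, h1l2, h1Q⟩ v₂ ⟨h2sm, h2l2, h2Q⟩ a b ha hb hab
    refine ⟨(h1sm.const_smul a).add (h2sm.const_smul b),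
      fun i => ((h1l2 i).const_mul a).add ((h2l2 i).const_mul b), ?_⟩
    have hpsd := Stmt15Aux.postCov_psd hXmeas hX3 hm
    have haesm : AEStronglyMeasurable
        (fun ω => (a • v₁ + b • v₂) ω ⬝ᵥ (postCov m μ X ω).mulVec ((a • v₁ + b • v₂) ω)) μ := by
      refine Stmt15Aux.quad_aesm hXmeas hX3 hm fun i => ?_
      exact ((((h1l2 i).aestronglyMeasurable).const_mul a).add
        (((h2l2 i).aestronglyMeasurable).const_mul b))
    refine Integrable.mono ((h1Q.abs.const_mul 2).add (h2Q.abs.const_mul 2)) haesm ?_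
    filter_upwards [hpsd] with ω hω
    have h0 : 0 ≤ (a • v₁ + b • v₂) ω ⬝ᵥ (postCov m μ X ω).mulVec ((a • v₁ + b • v₂) ω) :=
      hω _
    have hQ1 := hω (v₁ ω)
    have hQ2 := hω (v₂ ω)
    have ha1 : a ≤ 1 := by linarith
    have hb1 : b ≤ 1 := by linarith
    have hle : (a • v₁ + b • v₂) ω ⬝ᵥ (postCov m μ X ω).mulVec ((a • v₁ + b • v₂) ω)
        ≤ 2 * (a^2 * (v₁ ω ⬝ᵥ (postCov m μ X ω).mulVec (v₁ ω)))
          + 2 * (b^2 * (v₂ ω ⬝ᵥ (postCov m μ X ω).mulVec (v₂ ω))) := by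
      have h := Stmt15Aux.quad_sum_le (postCov m μ X ω) hω (a • v₁ ω) (b • v₂ ω)
      rw [Stmt15Aux.smul_quad, Stmt15Aux.smul_quad] at h
      exact h
    rw [Real.norm_eq_abs, Real.norm_eq_abs, abs_of_nonneg h0]
    refine le_trans (hle.trans ?_) (le_abs_self _)
    show 2 * (a^2 * (v₁ ω ⬝ᵥ (postCov m μ X ω).mulVec (v₁ ω)))
          + 2 * (b^2 * (v₂ ω ⬝ᵥ (postCov m μ X ω).mulVec (v₂ ω)))
        ≤ 2 * |v₁ ω ⬝ᵥ (postCov m μ X ω).mulVec (v₁ ω)|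
          + 2 * |v₂ ω ⬝ᵥ (postCov m μ X ω).mulVec (v₂ ω)|
    nlinarith [le_abs_self (v₁ ω ⬝ᵥ (postCov m μ X ω).mulVec (v₁ ω)),
      le_abs_self (v₂ ω ⬝ᵥ (postCov m μ X ω).mulVec (v₂ ω)),
      mul_nonneg (mul_nonneg (sub_nonneg.2 ha1) (by linarith : (0:ℝ) ≤ 1 + a)) hQ1,
      mul_nonneg (mul_nonneg (sub_nonneg.2 hb1) (by linarith : (0:ℝ) ≤ 1 + b)) hQ2]
  · -- convexity inequality
    rintro v₁ ⟨h1sm, h1l2, h1Q⟩ v₂ ⟨h2sm, h2l2, h2Q⟩ a b ha hb hab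
    have hcsm : StronglyMeasurable[m] (a • v₁ + b • v₂) :=
      (h1sm.const_smul a).add (h2sm.const_smul b)
    have hcl2 : ∀ i, MemLp (fun ω => (a • v₁ + b • v₂) ω i) 2 μ := fun i =>
      ((h1l2 i).const_mul a).add ((h2l2 i).const_mul b)
    show (∫ ω, condVar' m μ
        (fun ω' => sqn (fun i => X ω' i - (a • v₁ + b • v₂) ω' i)) ω ∂μ)
      ≤ a * (∫ ω, condVar' m μ (fun ω' => sqn (fun i => X ω' i - v₁ ω' i)) ω ∂μ)
        + b * (∫ ω, condVar' m μ (fun ω' => sqn (fun i => X ω' i - v₂ ω' i)) ω ∂μ)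
    rw [Stmt15Aux.Fval hXmeas hX3 hm hcsm hcl2, Stmt15Aux.Fval hXmeas hX3 hm h1sm h1l2,
      Stmt15Aux.Fval hXmeas hX3 hm h2sm h2l2]
    set A : Ω → ℝ := fun ω => sqn (X ω) - (μ[(fun ω' => sqn (X ω'))|m]) ω with hAdef
    set SB : (Ω → Fin M → ℝ) → Ω → ℝ :=
      fun v ω => ∑ i, v ω i * Stmt15Aux.B m μ X i ω with hSBdef
    have hSBc : ∀ ω, SB (a • v₁ + b • v₂) ω = a * SB v₁ ω + b * SB v₂ ω := by
      intro ω
      simp only [hSBdef, Pi.add_apply, Pi.smul_apply, smul_eq_mul, Finset.mul_sum]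
      rw [← Finset.sum_add_distrib]
      exact Finset.sum_congr rfl fun i _ => by ring
    have hSB1 : MemLp (SB v₁) 2 μ := Stmt15Aux.memL2_sumB hXmeas hX3 hm h1sm h1Q
    have hSB2 : MemLp (SB v₂) 2 μ := Stmt15Aux.memL2_sumB hXmeas hX3 hm h2sm h2Q
    have hSBc2 : MemLp (SB (a • v₁ + b • v₂)) 2 μ := by
      have heq : SB (a • v₁ + b • v₂) = fun ω => a * SB v₁ ω + b * SB v₂ ω := funext hSBc
      rw [heq]
      exact (hSB1.const_mul a).add (hSB2.const_mul b)
    have hA_aesm : AEStronglyMeasurable A μ :=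
      (Stmt15Aux.sqnX_aesm hXmeas).sub
        (stronglyMeasurable_condExp.mono hm).aestronglyMeasurable
    have hR_aesm : ∀ w : Ω → Fin M → ℝ, AEStronglyMeasurable (SB w) μ →
        AEStronglyMeasurable (fun ω => A ω - 2 * SB w ω) μ :=
      fun w hw => hA_aesm.sub (hw.const_mul 2)
    have hRc : ∀ ω, A ω - 2 * SB (a • v₁ + b • v₂) ω
        = a * (A ω - 2 * SB v₁ ω) + b * (A ω - 2 * SB v₂ ω) := by
      intro ω
      rw [hSBc ω]
      linear_combination (A ω) * hab.symm
    by_cases hA : MemLp A 2 μ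
    · have hR1 : MemLp (fun ω => A ω - 2 * SB v₁ ω) 2 μ := hA.sub (hSB1.const_mul 2)
      have hR2 : MemLp (fun ω => A ω - 2 * SB v₂ ω) 2 μ := hA.sub (hSB2.const_mul 2)
      have hRc2 : MemLp (fun ω => A ω - 2 * SB (a • v₁ + b • v₂) ω) 2 μ :=
        hA.sub (hSBc2.const_mul 2)
      have hi1 : Integrable (fun ω => (A ω - 2 * SB v₁ ω)^2) μ := hR1.integrable_sq
      have hi2 : Integrable (fun ω => (A ω - 2 * SB v₂ ω)^2) μ := hR2.integrable_sq
      have hic : Integrable (fun ω => (A ω - 2 * SB (a • v₁ + b • v₂) ω)^2) μ :=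
        hRc2.integrable_sq
      calc ∫ ω, (A ω - 2 * SB (a • v₁ + b • v₂) ω)^2 ∂μ
          ≤ ∫ ω, (a * (A ω - 2 * SB v₁ ω)^2 + b * (A ω - 2 * SB v₂ ω)^2) ∂μ := by
            refine integral_mono_ae hic ((hi1.const_mul a).add (hi2.const_mul b))
              (Filter.Eventually.of_forall fun ω => ?_)
            show (A ω - 2 * SB (a • v₁ + b • v₂) ω)^2
              ≤ a * (A ω - 2 * SB v₁ ω)^2 + b * (A ω - 2 * SB v₂ ω)^2
            rw [hRc ω]
            nlinarith [sq_nonneg (A ω - 2 * SB v₁ ω - (A ω - 2 * SB v₂ ω)),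
              mul_nonneg ha hb]
        _ = a * (∫ ω, (A ω - 2 * SB v₁ ω)^2 ∂μ) + b * (∫ ω, (A ω - 2 * SB v₂ ω)^2 ∂μ) := by
            rw [integral_add (hi1.const_mul a) (hi2.const_mul b),
              integral_const_mul, integral_const_mul]
    · have hnot : ∀ w : Ω → Fin M → ℝ, MemLp (SB w) 2 μ →
          ¬ Integrable (fun ω => (A ω - 2 * SB w ω)^2) μ := by
        intro w hw hint
        apply hA
        have hRw : MemLp (fun ω => A ω - 2 * SB w ω) 2 μ :=
          (memLp_two_iff_integrable_sq (hR_aesm w hw.aestronglyMeasurable)).2 hint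
        have hsum : MemLp (fun ω => (A ω - 2 * SB w ω) + 2 * SB w ω) 2 μ :=
          hRw.add (hw.const_mul 2)
        have hAeq : A = fun ω => (A ω - 2 * SB w ω) + 2 * SB w ω := by
          funext ω; ring
        rw [hAeq]
        exact hsum
      rw [integral_undef (hnot _ hSBc2), integral_undef (hnot _ hSB1),
        integral_undef (hnot _ hSB2)]
      norm_num
end
end

section
/- Under Slater's condition for the risk constraint — existence of a feasible X̂† ∈ L²(σ(Y)) with E[V_Y[‖X − X̂†‖₂²]] < ε — it necessarily holds that E[V_Y[‖X‖₂²]] < ∞. -/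
open MeasureTheory

noncomputable section

/-- The expected predictive variance (risk) `E[V_Y[Z]] = E[(Z − E[Z|Y])²]` of a real
random variable `Z`, as an extended nonnegative real; `m` plays the role of `σ(Y)`. -/
def risk {Ω : Type*} {m0 : MeasurableSpace Ω} (m : MeasurableSpace Ω) (μ : @Measure Ω m0)
    (Z : Ω → ℝ) : ENNReal :=
  ∫⁻ ω, ENNReal.ofReal ((Z ω - (μ[Z|m]) ω) ^ 2) ∂μ

section Aux

variable {Ω : Type*}

private lemma aux_cube_bound {a : ℝ} (ha : 0 ≤ a) : a ≤ 1 + a ^ 3 ∧ a ^ 2 ≤ 1 + a ^ 3 := by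
  constructor <;>
    nlinarith [sq_nonneg (a - 1), mul_nonneg ha (sq_nonneg (a - 1)), sq_nonneg a, sq_nonneg (a + 1)]

private lemma aux_young1 {a u : ℝ} (ha : 0 ≤ a) (hu : 1 ≤ u) : a ^ 2 ≤ u⁻¹ * a ^ 3 + u ^ 2 := by
  have hu0 : (0:ℝ) < u := lt_of_lt_of_le one_pos hu
  rcases le_total a u with h | h
  · have h2 : (0:ℝ) ≤ u⁻¹ * a ^ 3 := by positivity
    nlinarith
  · have h1 : a ^ 2 ≤ u⁻¹ * a ^ 3 := by
      rw [inv_mul_eq_div, le_div_iff₀ hu0]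
      nlinarith
    nlinarith [sq_nonneg u]

private lemma aux_young2 {a u : ℝ} (ha : 0 ≤ a) (hu : 1 ≤ u) : a ≤ (u ^ 2)⁻¹ * a ^ 3 + u := by
  have hu0 : (0:ℝ) < u := lt_of_lt_of_le one_pos hu
  rcases le_total a u with h | h
  · have h2 : (0:ℝ) ≤ (u ^ 2)⁻¹ * a ^ 3 := by positivity
    linarith
  · have h1 : a ≤ (u ^ 2)⁻¹ * a ^ 3 := by
      rw [inv_mul_eq_div, le_div_iff₀ (by positivity)]
      nlinarith [mul_nonneg (mul_nonneg ha (sub_nonneg.2 h)) (show (0:ℝ) ≤ a + u by linarith)]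
    linarith

private lemma aux_mul_L1 {m0 : MeasurableSpace Ω} {μ : Measure Ω} {f g : Ω → ℝ}
    (hf : MemLp f 2 μ) (hg : MemLp g 2 μ) : Integrable (fun ω => f ω * g ω) μ := by
  have h : Integrable (fun ω => (1/2 : ℝ) * (f ω ^ 2 + g ω ^ 2)) μ :=
    (hf.integrable_sq.add hg.integrable_sq).const_mul _
  refine h.mono' (hf.aestronglyMeasurable.mul hg.aestronglyMeasurable) ?_
  filter_upwards with ω
  rw [Real.norm_eq_abs, abs_mul]
  nlinarith [sq_nonneg (|f ω| - |g ω|), abs_nonneg (f ω), abs_nonneg (g ω), sq_abs (f ω),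
    sq_abs (g ω)]

private lemma aux_int_mul_condexp {m m0 : MeasurableSpace Ω} (hm : m ≤ m0)
    {μ : Measure Ω} [IsProbabilityMeasure μ] {g f : Ω → ℝ} (hg : StronglyMeasurable[m] g)
    {c : ℝ} (hgc : ∀ᵐ ω ∂μ, |g ω| ≤ c) (hf : Integrable f μ) :
    ∫ ω, g ω * f ω ∂μ = ∫ ω, g ω * (μ[f|m]) ω ∂μ := by
  haveI : IsFiniteMeasure (μ.trim hm) := isFiniteMeasure_trim hm
  have hb : ∀ᵐ ω ∂μ, ‖g ω‖ ≤ c := by simpa [Real.norm_eq_abs] using hgc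
  have h1 : μ[g * f|m] =ᵐ[μ] g * μ[f|m] := condExp_stronglyMeasurable_mul_of_bound hm hg hf c hb
  calc ∫ ω, g ω * f ω ∂μ = ∫ ω, (μ[g * f|m]) ω ∂μ := (integral_condExp hm).symm
    _ = ∫ ω, (g * μ[f|m]) ω ∂μ := integral_congr_ae h1
    _ = ∫ ω, g ω * (μ[f|m]) ω ∂μ := rfl

private lemma aux_condExp_le {m m0 : MeasurableSpace Ω} (hm : m ≤ m0)
    {μ : Measure Ω} [IsProbabilityMeasure μ] {f g v w : Ω → ℝ}
    (hf : Integrable f μ) (hg : Integrable g μ)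
    (hv : StronglyMeasurable[m] v) (hw : StronglyMeasurable[m] w)
    (hv1 : ∀ᵐ ω ∂μ, |v ω| ≤ 1) (hwint : Integrable w μ)
    (hpt : ∀ᵐ ω ∂μ, f ω ≤ v ω * g ω + w ω) :
    ∀ᵐ ω ∂μ, (μ[f|m]) ω ≤ v ω * (μ[g|m]) ω + w ω := by
  haveI : IsFiniteMeasure (μ.trim hm) := isFiniteMeasure_trim hm
  have hb : ∀ᵐ ω ∂μ, ‖v ω‖ ≤ 1 := by simpa [Real.norm_eq_abs] using hv1
  have hvg : Integrable (v * g) μ := hg.bdd_mul ((hv.mono hm).aestronglyMeasurable) hb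
  have h1 : μ[f|m] ≤ᵐ[μ] μ[v * g + w|m] := by
    refine condExp_mono hf (hvg.add hwint) ?_
    filter_upwards [hpt] with ω h
    exact h
  have ha : μ[v * g + w|m] =ᵐ[μ] μ[v * g|m] + μ[w|m] := condExp_add hvg hwint m
  have hb2 : μ[v * g|m] =ᵐ[μ] v * μ[g|m] := condExp_stronglyMeasurable_mul_of_bound hm hv hg 1 hb
  have hc : μ[w|m] = w := condExp_of_stronglyMeasurable hm hw hwint
  filter_upwards [h1, ha, hb2] with ω h₁ h₂ h₃
  have : (μ[v * g + w|m]) ω = v ω * (μ[g|m]) ω + w ω := by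
    rw [h₂]
    simp only [Pi.add_apply, Pi.mul_apply] at h₃ ⊢
    rw [h₃, hc]
  rw [← this]
  exact h₁

end Aux

set_option maxHeartbeats 1000000 in
/-- Under Slater's condition for the risk constraint — existence of a
feasible `σ(Y)`-measurable square-integrable `X̂†` with `E[V_Y[‖X − X̂†‖₂²]] < ε` — it
necessarily holds that `E[V_Y[‖X‖₂²]] < ∞` (under the moment assumption
`E[(E[‖X‖₂³|Y])²] < ∞`; `m` plays the role of `σ(Y)`). -/
theorem stmt19 {Ω : Type*} (m : MeasurableSpace Ω) [m0 : MeasurableSpace Ω] (hm : m ≤ m0)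
    (μ : Measure Ω) [IsProbabilityMeasure μ] {M : ℕ}
    (X Xdag : Ω → Fin M → ℝ)
    (hXmeas : ∀ i, AEMeasurable (fun ω => X ω i) μ)
    (hX3 : Integrable (fun ω => enorm2 (X ω) ^ 3) μ)
    (hmom : MemLp (μ[(fun ω => enorm2 (X ω) ^ 3)|m]) 2 μ)
    (hXdagm : StronglyMeasurable[m] Xdag)
    (hXdag2 : ∀ i, MemLp (fun ω => Xdag ω i) 2 μ)
    (ε : ℝ) (hε : 0 < ε)
    (hslater : risk m μ (fun ω => sqn (fun i => X ω i - Xdag ω i)) < ENNReal.ofReal ε) :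
    risk m μ (fun ω => sqn (X ω)) < ⊤ := by
  haveI : IsFiniteMeasure (μ.trim hm) := isFiniteMeasure_trim hm
  -- ### Notation
  set Nl : Ω → ℝ := fun ω => enorm2 (X ω) with hNl
  set N3 : Ω → ℝ := fun ω => enorm2 (X ω) ^ 3 with hN3
  set Z : Ω → ℝ := fun ω => sqn (X ω) with hZ
  set W : Ω → ℝ := fun ω => sqn (fun i => X ω i - Xdag ω i) with hW
  set T' : Ω → ℝ := fun ω => ∑ i, Xdag ω i * X ω i with hT'
  set Qf : Ω → ℝ := fun ω => sqn (Xdag ω) with hQf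
  set c3 : Ω → ℝ := μ[N3|m] with hc3
  set cZ : Ω → ℝ := μ[Z|m] with hcZ
  set cW : Ω → ℝ := μ[W|m] with hcW
  set cT : Ω → ℝ := μ[T'|m] with hcT
  -- ### basic pointwise facts
  have hsqn0 : ∀ (v : Fin M → ℝ), 0 ≤ sqn v := fun v => Finset.sum_nonneg fun i _ => sq_nonneg _
  have hN0 : ∀ ω, 0 ≤ Nl ω := fun ω => Real.sqrt_nonneg _
  have hNsq : ∀ ω, Nl ω ^ 2 = Z ω := fun ω => Real.sq_sqrt (hsqn0 _)
  have hN3eq : ∀ ω, N3 ω = Nl ω ^ 3 := fun ω => rfl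
  have habsle : ∀ ω i, |X ω i| ≤ Nl ω := by
    intro ω i
    rw [hNl]
    simp only [enorm2]
    rw [← Real.sqrt_sq_eq_abs]
    exact Real.sqrt_le_sqrt (Finset.single_le_sum (f := fun j => X ω j ^ 2)
      (fun j _ => sq_nonneg _) (Finset.mem_univ i))
  have hZN3 : ∀ ω, Z ω ≤ 1 + N3 ω := by
    intro ω
    rw [← hNsq ω, hN3eq ω]
    exact (aux_cube_bound (hN0 ω)).2
  have hNN3 : ∀ ω, Nl ω ≤ 1 + N3 ω := by
    intro ω
    rw [hN3eq ω]
    exact (aux_cube_bound (hN0 ω)).1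
  have hZdecomp : ∀ ω, Z ω = W ω + 2 * T' ω - Qf ω := by
    intro ω
    simp only [hZ, hW, hT', hQf, sqn]
    rw [Finset.mul_sum, ← Finset.sum_add_distrib, ← Finset.sum_sub_distrib]
    exact Finset.sum_congr rfl fun i _ => by ring
  -- ### measurability
  have hXdagim : ∀ i, StronglyMeasurable[m] (fun ω => Xdag ω i) := fun i =>
    (continuous_apply i).comp_stronglyMeasurable hXdagm
  have hXdagim0 : ∀ i, AEStronglyMeasurable (fun ω => Xdag ω i) μ := fun i =>
    ((hXdagim i).mono hm).aestronglyMeasurable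
  have hZaem : AEMeasurable Z μ := by
    rw [hZ]
    simp only [sqn]
    exact Finset.aemeasurable_fun_sum _ fun i _ => (hXmeas i).pow_const 2
  have hNaem : AEMeasurable Nl μ := by
    have : Nl = fun ω => Real.sqrt (Z ω) := by
      funext ω; rw [hNl, hZ]; rfl
    rw [this]
    exact Real.continuous_sqrt.measurable.comp_aemeasurable hZaem
  have hT'aem : AEMeasurable T' μ := by
    rw [hT']
    exact Finset.aemeasurable_fun_sum _ fun i _ =>
      (((hXdagim i).mono hm).measurable.aemeasurable.mul (hXmeas i))
  have hQm : StronglyMeasurable[m] Qf := by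
    have hcont : Continuous (fun v : Fin M → ℝ => sqn v) := by
      simp only [sqn]
      exact continuous_finset_sum _ fun i _ => (continuous_apply i).pow 2
    exact hcont.comp_stronglyMeasurable hXdagm
  have hWaesm : AEStronglyMeasurable W μ := by
    have : W = fun ω => Z ω - 2 * T' ω + Qf ω := by
      funext ω; have := hZdecomp ω; linarith
    rw [this]
    exact ((hZaem.sub ((aemeasurable_const (b := (2:ℝ))).mul hT'aem)).add
      ((hQm.mono hm).measurable.aemeasurable)).aestronglyMeasurable
  -- ### integrability
  have hc3int : Integrable c3 μ := by rw [hc3]; exact integrable_condExp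
  have hN3int : Integrable N3 μ := hX3
  have hone_c3 : Integrable (fun ω => 1 + |c3 ω|) μ := (integrable_const 1).add hc3int.abs
  have hZint : Integrable Z μ := by
    refine ((integrable_const (1:ℝ)).add hN3int).mono' hZaem.aestronglyMeasurable ?_
    filter_upwards with ω
    rw [Real.norm_eq_abs, abs_of_nonneg (by rw [hZ]; exact hsqn0 _)]
    exact hZN3 ω
  have hNint : Integrable Nl μ := by
    refine ((integrable_const (1:ℝ)).add hN3int).mono' hNaem.aestronglyMeasurable ?_
    filter_upwards with ω
    rw [Real.norm_eq_abs, abs_of_nonneg (hN0 ω)]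
    exact hNN3 ω
  have hXi2 : ∀ i, MemLp (fun ω => X ω i) 2 μ := by
    intro i
    refine (memLp_two_iff_integrable_sq (hXmeas i).aestronglyMeasurable).2 ?_
    refine hZint.mono' ((hXmeas i).pow_const 2).aestronglyMeasurable ?_
    filter_upwards with ω
    rw [Real.norm_eq_abs, abs_of_nonneg (sq_nonneg _), hZ]
    exact Finset.single_le_sum (f := fun j => X ω j ^ 2) (fun j _ => sq_nonneg _)
      (Finset.mem_univ i)
  have hXiint : ∀ i, Integrable (fun ω => X ω i) μ := fun i => (hXi2 i).integrable one_le_two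
  have hN2 : MemLp Nl 2 μ := by
    refine (memLp_two_iff_integrable_sq hNaem.aestronglyMeasurable).2 ?_
    have : (fun ω => Nl ω ^ 2) = Z := funext fun ω => hNsq ω
    rw [this]; exact hZint
  have hZXiint : ∀ i, Integrable (fun ω => Z ω * X ω i) μ := by
    intro i
    refine hN3int.mono' (hZaem.mul (hXmeas i)).aestronglyMeasurable ?_
    filter_upwards with ω
    rw [Real.norm_eq_abs, abs_mul, abs_of_nonneg (by rw [hZ]; exact hsqn0 _)]
    calc Z ω * |X ω i| ≤ Z ω * Nl ω :=
          mul_le_mul_of_nonneg_left (habsle ω i) (by rw [hZ]; exact hsqn0 _)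
      _ = N3 ω := by rw [← hNsq ω, hN3eq ω]; ring
  have hT'int : Integrable T' μ := by
    rw [hT']
    exact integrable_finset_sum _ fun i _ => aux_mul_L1 (hXdag2 i) (hXi2 i)
  have hQint : Integrable Qf μ := by
    rw [hQf]
    have : (fun ω => sqn (Xdag ω)) = fun ω => ∑ i, Xdag ω i ^ 2 := rfl
    rw [this]
    exact integrable_finset_sum _ fun i _ => (hXdag2 i).integrable_sq
  have hWint : Integrable W μ := by
    have : W = fun ω => Z ω - 2 * T' ω + Qf ω := by
      funext ω; have := hZdecomp ω; linarith
    rw [this]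
    exact (hZint.sub (hT'int.const_mul 2)).add hQint
  -- ### conditional expectation basics
  have hc30 : ∀ᵐ ω ∂μ, 0 ≤ c3 ω := by
    have h := condExp_nonneg (m := m) (μ := μ) (f := N3)
      (Filter.Eventually.of_forall fun ω => by
        simp only [Pi.zero_apply, hN3]
        exact pow_nonneg (Real.sqrt_nonneg _) 3)
    rw [← hc3] at h
    filter_upwards [h] with ω hω
    exact hω
  have hc3m : StronglyMeasurable[m] c3 := by rw [hc3]; exact stronglyMeasurable_condExp
  -- the auxiliary weight u = (1 + c3) ^ (1/3)
  set u : Ω → ℝ := fun ω => (1 + c3 ω) ^ ((1:ℝ)/3) with hu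
  have hum : StronglyMeasurable[m] u := by
    rw [hu]
    exact (Real.continuous_rpow_const (by norm_num)).comp_stronglyMeasurable
      (stronglyMeasurable_const.add hc3m)
  have hu1 : ∀ᵐ ω ∂μ, 1 ≤ u ω := by
    filter_upwards [hc30] with ω h
    rw [hu]
    exact Real.one_le_rpow (by linarith) (by norm_num)
  have hu3 : ∀ᵐ ω ∂μ, u ω ^ 3 = 1 + c3 ω := by
    filter_upwards [hc30] with ω h
    rw [hu]
    have h1 : (0:ℝ) ≤ 1 + c3 ω := by linarith
    rw [← Real.rpow_natCast ((1 + c3 ω) ^ ((1:ℝ)/3)) 3, ← Real.rpow_mul h1]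
    norm_num
  have hu2_bound : ∀ᵐ ω ∂μ, u ω ^ 2 ≤ 1 + |c3 ω| := by
    filter_upwards [hu1, hu3] with ω h1 h3
    have : u ω ^ 2 ≤ u ω ^ 3 := by nlinarith
    calc u ω ^ 2 ≤ 1 + c3 ω := by linarith
      _ ≤ 1 + |c3 ω| := by linarith [le_abs_self (c3 ω)]
  have hu_bound : ∀ᵐ ω ∂μ, u ω ≤ 1 + |c3 ω| := by
    filter_upwards [hu1, hu3] with ω h1 h3
    have : u ω ≤ u ω ^ 3 := by
      nlinarith [mul_nonneg (mul_nonneg (show (0:ℝ) ≤ u ω by linarith)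
        (show (0:ℝ) ≤ u ω - 1 by linarith)) (show (0:ℝ) ≤ u ω + 1 by linarith)]
    calc u ω ≤ 1 + c3 ω := by linarith
      _ ≤ 1 + |c3 ω| := by linarith [le_abs_self (c3 ω)]
  have hu2int : Integrable (fun ω => u ω ^ 2) μ := by
    refine hone_c3.mono' ?_ ?_
    · exact (((hum.mono hm).measurable.pow_const 2)).aemeasurable.aestronglyMeasurable
    · filter_upwards [hu2_bound] with ω h
      rw [Real.norm_eq_abs, abs_of_nonneg (sq_nonneg _)]
      exact h
  have huint : Integrable u μ := by
    refine hone_c3.mono' ((hum.mono hm).aestronglyMeasurable) ?_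
    filter_upwards [hu_bound, hu1] with ω h h1
    rw [Real.norm_eq_abs, abs_of_nonneg (by linarith)]
    exact h
  -- conditional bound on E[Z|m]
  have hZcond : ∀ᵐ ω ∂μ, cZ ω ≤ 2 * u ω ^ 2 := by
    have hv : StronglyMeasurable[m] (fun ω => (u ω)⁻¹) := by
      exact ((hum.measurable.inv)).stronglyMeasurable
    have hv1 : ∀ᵐ ω ∂μ, |(u ω)⁻¹| ≤ 1 := by
      filter_upwards [hu1] with ω h
      have h0 : (0:ℝ) < u ω := lt_of_lt_of_le one_pos h
      rw [abs_of_nonneg (inv_nonneg.2 h0.le), inv_eq_one_div]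
      exact (div_le_one h0).2 h
    have hw : StronglyMeasurable[m] (fun ω => u ω ^ 2) :=
      (hum.measurable.pow_const 2).stronglyMeasurable
    have hpt : ∀ᵐ ω ∂μ, Z ω ≤ (u ω)⁻¹ * N3 ω + u ω ^ 2 := by
      filter_upwards [hu1] with ω h
      rw [← hNsq ω, hN3eq ω]
      exact aux_young1 (hN0 ω) h
    have h := aux_condExp_le hm hZint hN3int hv hw hv1 hu2int hpt
    rw [← hc3, ← hcZ] at h
    filter_upwards [h, hu1, hu3, hc30] with ω h1 h2 h3 h4
    have h0 : (0:ℝ) < u ω := lt_of_lt_of_le one_pos h2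
    have hinv : (u ω)⁻¹ * c3 ω ≤ u ω ^ 2 := by
      rw [inv_mul_le_iff₀ h0]
      nlinarith
    linarith
  have hNcond : ∀ᵐ ω ∂μ, (μ[Nl|m]) ω ≤ 2 * u ω := by
    have hv : StronglyMeasurable[m] (fun ω => (u ω ^ 2)⁻¹) :=
      ((hum.measurable.pow_const 2).inv).stronglyMeasurable
    have hv1 : ∀ᵐ ω ∂μ, |(u ω ^ 2)⁻¹| ≤ 1 := by
      filter_upwards [hu1] with ω h
      have h0 : (0:ℝ) < u ω ^ 2 := by positivity
      rw [abs_of_nonneg (inv_nonneg.2 h0.le), inv_eq_one_div]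
      exact (div_le_one h0).2 (by nlinarith)
    have hpt : ∀ᵐ ω ∂μ, Nl ω ≤ (u ω ^ 2)⁻¹ * N3 ω + u ω := by
      filter_upwards [hu1] with ω h
      rw [hN3eq ω]
      exact aux_young2 (hN0 ω) h
    have h := aux_condExp_le hm hNint hN3int hv hum hv1 huint hpt
    rw [← hc3] at h
    filter_upwards [h, hu1, hu3, hc30] with ω h1 h2 h3 h4
    have h0 : (0:ℝ) < u ω := lt_of_lt_of_le one_pos h2
    have hinv : (u ω ^ 2)⁻¹ * c3 ω ≤ u ω := by
      rw [inv_mul_le_iff₀ (by positivity)]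
      nlinarith
    linarith
  have hcZ0 : ∀ᵐ ω ∂μ, 0 ≤ cZ ω := by
    have h := condExp_nonneg (m := m) (μ := μ) (f := Z)
      (Filter.Eventually.of_forall fun ω => by
        simp only [Pi.zero_apply, hZ]
        exact hsqn0 _)
    rw [← hcZ] at h
    filter_upwards [h] with ω hω
    exact hω
  have hcZ2 : MemLp cZ 2 μ := by
    refine MemLp.of_le (g := fun ω => 2 * (1 + |c3 ω|))
      (((memLp_const (1:ℝ)).add hmom.abs).const_mul 2)
      ((stronglyMeasurable_condExp.mono hm).aestronglyMeasurable) ?_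
    filter_upwards [hcZ0, hZcond, hu2_bound] with ω h0 h1 h2
    rw [Real.norm_eq_abs, Real.norm_eq_abs, abs_of_nonneg h0, abs_of_nonneg (by positivity)]
    calc cZ ω ≤ 2 * u ω ^ 2 := h1
      _ ≤ 2 * (1 + |c3 ω|) := by linarith
  -- bounds on conditional moments
  have hXicond : ∀ i, ∀ᵐ ω ∂μ, |(μ[(fun ω' => X ω' i)|m]) ω| ≤ 2 * u ω := by
    intro i
    have h1 : μ[(fun ω' => X ω' i)|m] ≤ᵐ[μ] μ[Nl|m] :=
      condExp_mono (hXiint i) hNint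
        (Filter.Eventually.of_forall fun ω => le_trans (le_abs_self _) (habsle ω i))
    have h2 : μ[-Nl|m] ≤ᵐ[μ] μ[(fun ω' => X ω' i)|m] :=
      condExp_mono hNint.neg (hXiint i)
        (Filter.Eventually.of_forall fun ω => by
          simp only [Pi.neg_apply]
          linarith [(abs_le.1 (habsle ω i)).1])
    have h3 : μ[-Nl|m] =ᵐ[μ] -μ[Nl|m] := condExp_neg Nl m
    filter_upwards [h1, h2, h3, hNcond] with ω a1 a2 a3 a4
    rw [a3] at a2
    simp only [Pi.neg_apply] at a2
    rw [abs_le]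
    constructor
    · linarith
    · linarith
  have hZXicond : ∀ i, ∀ᵐ ω ∂μ, |(μ[(fun ω' => Z ω' * X ω' i)|m]) ω| ≤ c3 ω := by
    intro i
    have hb : ∀ ω, |Z ω * X ω i| ≤ N3 ω := by
      intro ω
      rw [abs_mul, abs_of_nonneg (by rw [hZ]; exact hsqn0 _)]
      calc Z ω * |X ω i| ≤ Z ω * Nl ω :=
            mul_le_mul_of_nonneg_left (habsle ω i) (by rw [hZ]; exact hsqn0 _)
        _ = N3 ω := by rw [← hNsq ω, hN3eq ω]; ring
    have h1 : μ[(fun ω' => Z ω' * X ω' i)|m] ≤ᵐ[μ] μ[N3|m] :=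
      condExp_mono (hZXiint i) hN3int
        (Filter.Eventually.of_forall fun ω => le_trans (le_abs_self _) (hb ω))
    have h2 : μ[-N3|m] ≤ᵐ[μ] μ[(fun ω' => Z ω' * X ω' i)|m] :=
      condExp_mono hN3int.neg (hZXiint i)
        (Filter.Eventually.of_forall fun ω => by
          simp only [Pi.neg_apply]
          linarith [(abs_le.1 (hb ω)).1])
    have h3 : μ[-N3|m] =ᵐ[μ] -μ[N3|m] := condExp_neg N3 m
    rw [← hc3] at h1 h3
    filter_upwards [h1, h2, h3] with ω a1 a2 a3
    rw [a3] at a2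
    simp only [Pi.neg_apply] at a2
    rw [abs_le]
    exact ⟨by linarith, a1⟩
  -- the functions φ i and their bound ψ
  set ψ : Ω → ℝ := fun ω => 4 + 5 * |c3 ω| with hψ
  have hψ0 : ∀ ω, 0 ≤ ψ ω := fun ω => by rw [hψ]; positivity
  have hψ2 : MemLp ψ 2 μ := by
    rw [hψ]
    exact (memLp_const (4:ℝ)).add (hmom.abs.const_mul 5)
  set φ : Fin M → Ω → ℝ :=
    fun i ω => (μ[(fun ω' => Z ω' * X ω' i)|m]) ω - cZ ω * (μ[(fun ω' => X ω' i)|m]) ω with hφ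
  have hφbound : ∀ i, ∀ᵐ ω ∂μ, |φ i ω| ≤ ψ ω := by
    intro i
    filter_upwards [hZXicond i, hXicond i, hcZ0, hZcond, hu3, hu1, hc30] with ω a1 a2 a3 a4 a5 a6 a7
    simp only [hφ, hψ]
    have habs : |cZ ω * (μ[(fun ω' => X ω' i)|m]) ω| ≤ (2 * u ω ^ 2) * (2 * u ω) := by
      rw [abs_mul]
      refine mul_le_mul ?_ a2 (abs_nonneg _) (by positivity)
      rw [abs_of_nonneg a3]; exact a4
    have hcube : (2 * u ω ^ 2) * (2 * u ω) = 4 * (1 + c3 ω) := by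
      have : u ω ^ 2 * u ω = u ω ^ 3 := by ring
      nlinarith [a5]
    have : |(μ[(fun ω' => Z ω' * X ω' i)|m]) ω - cZ ω * (μ[(fun ω' => X ω' i)|m]) ω| ≤
        |(μ[(fun ω' => Z ω' * X ω' i)|m]) ω| + |cZ ω * (μ[(fun ω' => X ω' i)|m]) ω| := abs_sub _ _
    have hc3abs : c3 ω = |c3 ω| := (abs_of_nonneg a7).symm
    calc |(μ[(fun ω' => Z ω' * X ω' i)|m]) ω - cZ ω * (μ[(fun ω' => X ω' i)|m]) ω|
        ≤ |(μ[(fun ω' => Z ω' * X ω' i)|m]) ω| + |cZ ω * (μ[(fun ω' => X ω' i)|m]) ω| := this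
      _ ≤ c3 ω + 4 * (1 + c3 ω) := by rw [← hcube]; exact add_le_add a1 habs
      _ = 4 + 5 * c3 ω := by ring
      _ ≤ 4 + 5 * |c3 ω| := by linarith [le_abs_self (c3 ω)]
  have hφaesm : ∀ i, AEStronglyMeasurable (φ i) μ := by
    intro i
    rw [hφ]
    exact ((stronglyMeasurable_condExp.mono hm).aestronglyMeasurable).sub
      (((stronglyMeasurable_condExp.mono hm).aestronglyMeasurable).mul
        ((stronglyMeasurable_condExp.mono hm).aestronglyMeasurable))
  have hφ2 : ∀ i, MemLp (φ i) 2 μ := by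
    intro i
    refine MemLp.of_le hψ2 (hφaesm i) ?_
    filter_upwards [hφbound i] with ω h
    rw [Real.norm_eq_abs, Real.norm_eq_abs, abs_of_nonneg (hψ0 ω)]
    exact h
  have hφint : ∀ i, Integrable (φ i) μ := fun i => (hφ2 i).integrable one_le_two
  -- conditional expectation of Bf * Xᵢ equals φ i
  set Bf : Ω → ℝ := fun ω => Z ω - cZ ω with hBf
  have hcZXiint : ∀ i, Integrable (fun ω => cZ ω * X ω i) μ := fun i =>
    aux_mul_L1 hcZ2 (hXi2 i)
  have hBfXiint : ∀ i, Integrable (fun ω => Bf ω * X ω i) μ := by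
    intro i
    have : (fun ω => Bf ω * X ω i) = fun ω => Z ω * X ω i - cZ ω * X ω i := by
      funext ω; simp only [hBf]; ring
    rw [this]
    exact (hZXiint i).sub (hcZXiint i)
  have hcondBXi : ∀ i, μ[(fun ω => Bf ω * X ω i)|m] =ᵐ[μ] φ i := by
    intro i
    have e : (fun ω => Bf ω * X ω i) =
        (fun ω => Z ω * X ω i) - cZ * (fun ω' => X ω' i) := by
      funext ω
      simp only [Pi.sub_apply, Pi.mul_apply, hBf]
      ring
    rw [e]
    have h1 : μ[(fun ω => Z ω * X ω i) - cZ * (fun ω' => X ω' i)|m] =ᵐ[μ]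
        μ[(fun ω => Z ω * X ω i)|m] - μ[cZ * (fun ω' => X ω' i)|m] :=
      condExp_sub (hZXiint i) (hcZXiint i) m
    have h2 : μ[cZ * (fun ω' => X ω' i)|m] =ᵐ[μ] cZ * μ[(fun ω' => X ω' i)|m] := by
      refine condExp_mul_of_stronglyMeasurable_left ?_ ?_ (hXiint i)
      · rw [hcZ]; exact stronglyMeasurable_condExp
      · exact hcZXiint i
    filter_upwards [h1, h2] with ω a1 a2
    rw [hφ]
    simp only [Pi.sub_apply, Pi.mul_apply] at a1 a2 ⊢
    rw [a1, a2]
  -- μ[Bf|m] = 0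
  have hBfint : Integrable Bf μ := by
    have : Bf = Z - cZ := by funext ω; rw [hBf]; rfl
    rw [this, hcZ]
    exact hZint.sub integrable_condExp
  have hcondBf0 : μ[Bf|m] =ᵐ[μ] 0 := by
    have e : Bf = Z - cZ := by funext ω; rw [hBf]; rfl
    have hcZint : Integrable cZ μ := by rw [hcZ]; exact integrable_condExp
    have h1 : μ[Z - cZ|m] =ᵐ[μ] μ[Z|m] - μ[cZ|m] := condExp_sub hZint hcZint m
    have h2 : μ[cZ|m] = cZ := by
      rw [hcZ]
      exact condExp_of_stronglyMeasurable hm stronglyMeasurable_condExp integrable_condExp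
    rw [e]
    filter_upwards [h1] with ω a1
    simp only [Pi.sub_apply, Pi.zero_apply] at a1 ⊢
    rw [a1, h2, ← hcZ]
    ring
  -- decomposition B = A + 2T
  set Af : Ω → ℝ := fun ω => W ω - cW ω with hAf
  set Tf : Ω → ℝ := fun ω => T' ω - cT ω with hTf
  have hcondZeq : ∀ᵐ ω ∂μ, cZ ω = cW ω + 2 * cT ω - Qf ω := by
    have eZ : Z = (W + (2:ℝ) • T') - Qf := by
      funext ω
      simp only [Pi.sub_apply, Pi.add_apply, Pi.smul_apply, smul_eq_mul]
      exact hZdecomp ω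
    have hWT : Integrable (W + (2:ℝ) • T') μ := hWint.add (hT'int.smul (2:ℝ))
    have h1 : μ[(W + (2:ℝ) • T') - Qf|m] =ᵐ[μ] μ[W + (2:ℝ) • T'|m] - μ[Qf|m] :=
      condExp_sub hWT hQint m
    have h2 : μ[W + (2:ℝ) • T'|m] =ᵐ[μ] μ[W|m] + μ[(2:ℝ) • T'|m] :=
      condExp_add hWint (hT'int.smul (2:ℝ)) m
    have h3 : μ[(2:ℝ) • T'|m] =ᵐ[μ] (2:ℝ) • μ[T'|m] := condExp_smul (2:ℝ) T' m
    have h4 : μ[Qf|m] = Qf := condExp_of_stronglyMeasurable hm hQm hQint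
    have h5 : cZ =ᵐ[μ] μ[(W + (2:ℝ) • T') - Qf|m] := by rw [hcZ, eZ]
    filter_upwards [h1, h2, h3, h5] with ω a1 a2 a3 a5
    rw [a5, a1]
    simp only [Pi.sub_apply, Pi.add_apply, Pi.smul_apply, smul_eq_mul] at a2 a3 ⊢
    rw [a2, a3, h4, ← hcW, ← hcT]
  have hBA : ∀ᵐ ω ∂μ, Bf ω = Af ω + 2 * Tf ω := by
    filter_upwards [hcondZeq] with ω h
    simp only [hBf, hAf, hTf]
    have := hZdecomp ω
    linarith
  -- slater gives A ∈ L²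
  have hsl : ∫⁻ ω, ENNReal.ofReal (Af ω ^ 2) ∂μ < ENNReal.ofReal ε := hslater
  have hAaesm : AEStronglyMeasurable Af μ := by
    rw [hAf, hcW]
    exact hWaesm.sub (stronglyMeasurable_condExp.mono hm).aestronglyMeasurable
  have hAsqint : Integrable (fun ω => Af ω ^ 2) μ := by
    refine ⟨(hAaesm.aemeasurable.pow_const 2).aestronglyMeasurable, ?_⟩
    rw [hasFiniteIntegral_iff_ofReal (Filter.Eventually.of_forall fun ω => sq_nonneg _)]
    exact hsl.trans ENNReal.ofReal_lt_top
  have hA2 : MemLp Af 2 μ := (memLp_two_iff_integrable_sq hAaesm).2 hAsqint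
  -- the constant K and C
  set K : ℝ := ∑ i, ∫ ω, |Xdag ω i| * ψ ω ∂μ with hK
  have hXdagabs2 : ∀ i, MemLp (fun ω => |Xdag ω i|) 2 μ := fun i => (hXdag2 i).abs
  have hKiint : ∀ i, Integrable (fun ω => |Xdag ω i| * ψ ω) μ := fun i =>
    aux_mul_L1 (hXdagabs2 i) hψ2
  set C : ℝ := (∫ ω, Af ω ^ 2 ∂μ) + 4 * K with hC
  -- ### truncation sets
  set sset : ℕ → Set Ω := fun n => {ω | (∀ i, |Xdag ω i| ≤ (n:ℝ)) ∧ |cT ω| ≤ (n:ℝ)} with hsset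
  have hssetm : ∀ n, MeasurableSet[m] (sset n) := by
    intro n
    have hcTm : StronglyMeasurable[m] cT := by rw [hcT]; exact stronglyMeasurable_condExp
    have e : sset n = (⋂ i, (fun ω => Xdag ω i) ⁻¹' (Set.Icc (-(n:ℝ)) n)) ∩
        ((fun ω => cT ω) ⁻¹' (Set.Icc (-(n:ℝ)) n)) := by
      ext ω
      simp only [hsset, Set.mem_setOf_eq, Set.mem_inter_iff, Set.mem_iInter, Set.mem_preimage,
        Set.mem_Icc, abs_le]
    rw [e]
    refine MeasurableSet.inter ?_ ?_
    · exact MeasurableSet.iInter fun i => (hXdagim i).measurable measurableSet_Icc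
    · exact hcTm.measurable measurableSet_Icc
  set In : ℕ → Ω → ℝ := fun n => (sset n).indicator (fun _ => (1:ℝ)) with hIn
  have hIn01 : ∀ n ω, In n ω = 0 ∨ In n ω = 1 := by
    intro n ω
    rw [hIn]
    by_cases h : ω ∈ sset n
    · right; simp [Set.indicator_of_mem h]
    · left; simp [Set.indicator_of_notMem h]
  have hInsq : ∀ n ω, In n ω * In n ω = In n ω := by
    intro n ω
    rcases hIn01 n ω with h | h <;> rw [h] <;> ring
  have hIn_nonneg : ∀ n ω, 0 ≤ In n ω := by
    intro n ω; rcases hIn01 n ω with h | h <;> rw [h] <;> norm_num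
  have hIn_le_one : ∀ n ω, In n ω ≤ 1 := by
    intro n ω; rcases hIn01 n ω with h | h <;> rw [h] <;> norm_num
  have hInm : ∀ n, StronglyMeasurable[m] (In n) := by
    intro n
    rw [hIn]
    exact stronglyMeasurable_const.indicator (hssetm n)
  have hInmem : ∀ n ω, ω ∈ sset n → In n ω = 1 := by
    intro n ω h; rw [hIn]; simp [Set.indicator_of_mem h]
  have hInnot : ∀ n ω, ω ∉ sset n → In n ω = 0 := by
    intro n ω h; rw [hIn]; simp [Set.indicator_of_notMem h]
  have hcTm : StronglyMeasurable[m] cT := by rw [hcT]; exact stronglyMeasurable_condExp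
  have hcZm : StronglyMeasurable[m] cZ := by rw [hcZ]; exact stronglyMeasurable_condExp
  have hTfaesm : AEStronglyMeasurable Tf μ := by
    rw [hTf]
    exact (hT'aem.sub ((hcTm.mono hm).measurable.aemeasurable)).aestronglyMeasurable
  have hBfaem : AEMeasurable Bf μ := by
    rw [hBf]
    exact hZaem.sub ((hcZm.mono hm).measurable.aemeasurable)
  -- main estimate for each n
  have hmain : ∀ n : ℕ, Integrable (fun ω => (In n ω * Bf ω) ^ 2) μ ∧
      ∫ ω, (In n ω * Bf ω) ^ 2 ∂μ ≤ C := by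
    intro n
    have hInXdag : ∀ i ω, |In n ω * Xdag ω i| ≤ (n:ℝ) := by
      intro i ω
      by_cases h : ω ∈ sset n
      · have h' : (∀ i, |Xdag ω i| ≤ (n:ℝ)) ∧ |cT ω| ≤ (n:ℝ) := h
        rw [hInmem n ω h, one_mul]
        exact h'.1 i
      · rw [hInnot n ω h, zero_mul, abs_zero]
        exact Nat.cast_nonneg n
    have hIncT : ∀ ω, |In n ω * cT ω| ≤ (n:ℝ) := by
      intro ω
      by_cases h : ω ∈ sset n
      · have h' : (∀ i, |Xdag ω i| ≤ (n:ℝ)) ∧ |cT ω| ≤ (n:ℝ) := h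
        rw [hInmem n ω h, one_mul]
        exact h'.2
      · rw [hInnot n ω h, zero_mul, abs_zero]
        exact Nat.cast_nonneg n
    have hInaesm : AEStronglyMeasurable (In n) μ := ((hInm n).mono hm).aestronglyMeasurable
    have hInTf2 : MemLp (fun ω => In n ω * Tf ω) 2 μ := by
      have hG : MemLp (fun ω => (n:ℝ) * (M:ℝ) * Nl ω + (n:ℝ)) 2 μ := by
        exact (hN2.const_mul ((n:ℝ) * (M:ℝ))).add (memLp_const (n:ℝ))
      refine MemLp.of_le hG (hInaesm.mul hTfaesm) ?_
      filter_upwards with ω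
      rw [Real.norm_eq_abs, Real.norm_eq_abs]
      refine le_trans ?_ (le_abs_self _)
      by_cases h : ω ∈ sset n
      · have h' : (∀ i, |Xdag ω i| ≤ (n:ℝ)) ∧ |cT ω| ≤ (n:ℝ) := h
        rw [hInmem n ω h, one_mul]
        have h1 : |T' ω| ≤ (n:ℝ) * (M:ℝ) * Nl ω := by
          simp only [hT']
          calc |∑ i, Xdag ω i * X ω i| ≤ ∑ i, |Xdag ω i * X ω i| :=
                Finset.abs_sum_le_sum_abs _ _
            _ ≤ ∑ _i : Fin M, (n:ℝ) * Nl ω := by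
                refine Finset.sum_le_sum fun i _ => ?_
                rw [abs_mul]
                exact mul_le_mul (h'.1 i) (habsle ω i) (abs_nonneg _) (Nat.cast_nonneg n)
            _ = (n:ℝ) * (M:ℝ) * Nl ω := by
                rw [Finset.sum_const, Finset.card_univ, Fintype.card_fin, nsmul_eq_mul]
                ring
        have h2 : |Tf ω| ≤ |T' ω| + |cT ω| := by
          simp only [hTf]
          exact abs_sub _ _
        calc |Tf ω| ≤ |T' ω| + |cT ω| := h2
          _ ≤ (n:ℝ) * (M:ℝ) * Nl ω + (n:ℝ) := add_le_add h1 h'.2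
      · rw [hInnot n ω h, zero_mul, abs_zero]
        have := hN0 ω
        positivity
    have hInAf2 : MemLp (fun ω => In n ω * Af ω) 2 μ := by
      refine MemLp.of_le hA2 (hInaesm.mul hAaesm) ?_
      filter_upwards with ω
      rw [Real.norm_eq_abs, Real.norm_eq_abs, abs_mul]
      calc |In n ω| * |Af ω| ≤ 1 * |Af ω| := by
            refine mul_le_mul_of_nonneg_right ?_ (abs_nonneg _)
            rw [abs_of_nonneg (hIn_nonneg n ω)]
            exact hIn_le_one n ω
        _ = |Af ω| := one_mul _
    have hInBf2 : MemLp (fun ω => In n ω * Bf ω) 2 μ := by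
      have he : (fun ω => In n ω * Af ω + 2 * (In n ω * Tf ω)) =ᵐ[μ]
          fun ω => In n ω * Bf ω := by
        filter_upwards [hBA] with ω h
        rw [h]; ring
      exact MemLp.ae_eq he (hInAf2.add (hInTf2.const_mul 2))
    have hInBfsq_int : Integrable (fun ω => (In n ω * Bf ω) ^ 2) μ := hInBf2.integrable_sq
    have hInTfsq_int : Integrable (fun ω => (In n ω * Tf ω) ^ 2) μ := hInTf2.integrable_sq
    have hInAfsq_int : Integrable (fun ω => In n ω * Af ω ^ 2) μ := by
      refine hAsqint.mono' (hInaesm.mul hAsqint.aestronglyMeasurable) ?_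
      filter_upwards with ω
      rw [Real.norm_eq_abs, abs_mul, abs_of_nonneg (sq_nonneg (Af ω)),
        abs_of_nonneg (hIn_nonneg n ω)]
      calc In n ω * Af ω ^ 2 ≤ 1 * Af ω ^ 2 :=
            mul_le_mul_of_nonneg_right (hIn_le_one n ω) (sq_nonneg _)
        _ = Af ω ^ 2 := one_mul _
    have hprod_int : Integrable (fun ω => (In n ω * Bf ω) * (In n ω * Tf ω)) μ :=
      aux_mul_L1 hInBf2 hInTf2
    have hid : ∀ᵐ ω ∂μ, In n ω * Af ω ^ 2 + 4 * ((In n ω * Bf ω) * (In n ω * Tf ω)) =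
        (In n ω * Bf ω) ^ 2 + 4 * (In n ω * Tf ω) ^ 2 := by
      filter_upwards [hBA] with ω h
      rw [h]
      have h2 : In n ω * In n ω = In n ω := hInsq n ω
      linear_combination (-(Af ω ^ 2)) * h2
    have hIsum := integral_congr_ae hid
    rw [integral_add hInAfsq_int (hprod_int.const_mul 4),
        integral_add hInBfsq_int (hInTfsq_int.const_mul 4),
        integral_const_mul, integral_const_mul] at hIsum
    have hgi : ∀ i, ∫ ω, (In n ω * Xdag ω i) * (Bf ω * X ω i) ∂μ ≤
        ∫ ω, |Xdag ω i| * ψ ω ∂μ := by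
      intro i
      have hgm : StronglyMeasurable[m] (fun ω => In n ω * Xdag ω i) :=
        (hInm n).mul (hXdagim i)
      have h1 : ∫ ω, (In n ω * Xdag ω i) * (Bf ω * X ω i) ∂μ =
          ∫ ω, (In n ω * Xdag ω i) * (μ[(fun ω' => Bf ω' * X ω' i)|m]) ω ∂μ :=
        aux_int_mul_condexp hm hgm (Filter.Eventually.of_forall (hInXdag i)) (hBfXiint i)
      have h2 : ∫ ω, (In n ω * Xdag ω i) * (μ[(fun ω' => Bf ω' * X ω' i)|m]) ω ∂μ =
          ∫ ω, (In n ω * Xdag ω i) * φ i ω ∂μ := by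
        refine integral_congr_ae ?_
        filter_upwards [hcondBXi i] with ω h
        rw [h]
      have hgφint : Integrable (fun ω => (In n ω * Xdag ω i) * φ i ω) μ :=
        (hφint i).bdd_mul (hgm.mono hm).aestronglyMeasurable
          (Filter.Eventually.of_forall fun ω => by
            rw [Real.norm_eq_abs]; exact hInXdag i ω)
      have h3 : ∫ ω, (In n ω * Xdag ω i) * φ i ω ∂μ ≤ ∫ ω, |Xdag ω i| * ψ ω ∂μ := by
        calc ∫ ω, (In n ω * Xdag ω i) * φ i ω ∂μ
            ≤ |∫ ω, (In n ω * Xdag ω i) * φ i ω ∂μ| := le_abs_self _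
          _ ≤ ∫ ω, |(In n ω * Xdag ω i) * φ i ω| ∂μ := by
              have := norm_integral_le_integral_norm (μ := μ)
                (fun ω => (In n ω * Xdag ω i) * φ i ω)
              simp only [Real.norm_eq_abs] at this
              exact this
          _ ≤ ∫ ω, |Xdag ω i| * ψ ω ∂μ := by
              refine integral_mono_ae hgφint.abs (hKiint i) ?_
              filter_upwards [hφbound i] with ω h
              rw [abs_mul]
              refine mul_le_mul ?_ h (abs_nonneg _) (abs_nonneg _)
              rw [abs_mul]
              calc |In n ω| * |Xdag ω i| ≤ 1 * |Xdag ω i| := by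
                    refine mul_le_mul_of_nonneg_right ?_ (abs_nonneg _)
                    rw [abs_of_nonneg (hIn_nonneg n ω)]
                    exact hIn_le_one n ω
                _ = |Xdag ω i| := one_mul _
      rw [h1, h2]
      exact h3
    have hg0 : ∫ ω, (In n ω * cT ω) * Bf ω ∂μ = 0 := by
      have hgm : StronglyMeasurable[m] (fun ω => In n ω * cT ω) := (hInm n).mul hcTm
      have h1 : ∫ ω, (In n ω * cT ω) * Bf ω ∂μ =
          ∫ ω, (In n ω * cT ω) * (μ[Bf|m]) ω ∂μ :=
        aux_int_mul_condexp hm hgm (Filter.Eventually.of_forall hIncT) hBfint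
      rw [h1]
      have hz : ∀ᵐ ω ∂μ, (In n ω * cT ω) * (μ[Bf|m]) ω = 0 := by
        filter_upwards [hcondBf0] with ω h
        simp only [Pi.zero_apply] at h
        rw [h, mul_zero]
      rw [integral_congr_ae hz, integral_zero]
    have hptw : ∀ ω, (In n ω * Bf ω) * (In n ω * Tf ω) =
        (∑ i, (In n ω * Xdag ω i) * (Bf ω * X ω i)) - (In n ω * cT ω) * Bf ω := by
      intro ω
      have h2 : In n ω * In n ω = In n ω := hInsq n ω
      have hsum : (∑ i, (In n ω * Xdag ω i) * (Bf ω * X ω i)) =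
          In n ω * Bf ω * T' ω := by
        simp only [hT']
        rw [Finset.mul_sum]
        exact Finset.sum_congr rfl fun i _ => by ring
      rw [hsum]
      simp only [hTf]
      linear_combination (Bf ω * (T' ω - cT ω)) * h2
    have hsum_int : ∀ i, Integrable (fun ω => (In n ω * Xdag ω i) * (Bf ω * X ω i)) μ :=
      fun i => (hBfXiint i).bdd_mul
        (((hInm n).mul (hXdagim i)).mono hm).aestronglyMeasurable
        (Filter.Eventually.of_forall fun ω => by
          rw [Real.norm_eq_abs]; exact hInXdag i ω)
    have hg0_int : Integrable (fun ω => (In n ω * cT ω) * Bf ω) μ :=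
      hBfint.bdd_mul (((hInm n).mul hcTm).mono hm).aestronglyMeasurable
        (Filter.Eventually.of_forall fun ω => by
          rw [Real.norm_eq_abs]; exact hIncT ω)
    have hcross : ∫ ω, (In n ω * Bf ω) * (In n ω * Tf ω) ∂μ ≤ K := by
      have he : ∫ ω, (In n ω * Bf ω) * (In n ω * Tf ω) ∂μ =
          (∑ i, ∫ ω, (In n ω * Xdag ω i) * (Bf ω * X ω i) ∂μ) -
            ∫ ω, (In n ω * cT ω) * Bf ω ∂μ := by
        rw [integral_congr_ae (Filter.Eventually.of_forall hptw),
          integral_sub (integrable_finset_sum _ fun i _ => hsum_int i) hg0_int,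
          integral_finset_sum _ fun i _ => hsum_int i]
      rw [he, hg0, sub_zero, hK]
      exact Finset.sum_le_sum fun i _ => hgi i
    have hTn2nonneg : 0 ≤ ∫ ω, (In n ω * Tf ω) ^ 2 ∂μ :=
      integral_nonneg fun ω => sq_nonneg _
    have hInAfle : ∫ ω, In n ω * Af ω ^ 2 ∂μ ≤ ∫ ω, Af ω ^ 2 ∂μ := by
      refine integral_mono_ae hInAfsq_int hAsqint ?_
      filter_upwards with ω
      calc In n ω * Af ω ^ 2 ≤ 1 * Af ω ^ 2 :=
            mul_le_mul_of_nonneg_right (hIn_le_one n ω) (sq_nonneg _)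
        _ = Af ω ^ 2 := one_mul _
    refine ⟨hInBfsq_int, ?_⟩
    rw [hC]
    linarith [hIsum, hcross, hTn2nonneg, hInAfle]
  -- ### pass to the limit
  have hssub : ∀ {n n' : ℕ}, n ≤ n' → sset n ⊆ sset n' := by
    intro n n' h ω hω
    have hω' : (∀ i, |Xdag ω i| ≤ (n:ℝ)) ∧ |cT ω| ≤ (n:ℝ) := hω
    have hcast : (n:ℝ) ≤ (n':ℝ) := Nat.cast_le.2 h
    exact ⟨fun i => le_trans (hω'.1 i) hcast, le_trans hω'.2 hcast⟩
  have hInmono : ∀ ω, Monotone fun n => ENNReal.ofReal ((In n ω * Bf ω) ^ 2) := by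
    intro ω n n' h
    refine ENNReal.ofReal_le_ofReal ?_
    by_cases hn : ω ∈ sset n
    · rw [hInmem n ω hn, hInmem n' ω (hssub h hn)]
    · rw [hInnot n ω hn, zero_mul]
      simpa using sq_nonneg (In n' ω * Bf ω)
  have hcover : ∀ ω, ENNReal.ofReal (Bf ω ^ 2) =
      ⨆ n, ENNReal.ofReal ((In n ω * Bf ω) ^ 2) := by
    intro ω
    refine le_antisymm ?_ ?_
    · obtain ⟨n, hn⟩ := exists_nat_ge (max (∑ i, |Xdag ω i|) |cT ω|)
      have hnmem : ω ∈ sset n := by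
        refine ⟨fun i => ?_, le_trans (le_max_right _ _) hn⟩
        refine le_trans ?_ (le_trans (le_max_left _ _) hn)
        exact Finset.single_le_sum (f := fun j => |Xdag ω j|) (fun j _ => abs_nonneg _)
          (Finset.mem_univ i)
      refine le_trans ?_ (le_iSup _ n)
      rw [hInmem n ω hnmem, one_mul]
    · refine iSup_le fun n => ?_
      refine ENNReal.ofReal_le_ofReal ?_
      rcases hIn01 n ω with h | h
      · rw [h, zero_mul]
        simpa using sq_nonneg (Bf ω)
      · rw [h, one_mul]
  have hfn_meas : ∀ n, AEMeasurable (fun ω => ENNReal.ofReal ((In n ω * Bf ω) ^ 2)) μ := by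
    intro n
    exact ENNReal.measurable_ofReal.comp_aemeasurable
      (((((hInm n).mono hm).measurable.aemeasurable).mul hBfaem).pow_const 2)
  have hlim : ∫⁻ ω, ENNReal.ofReal (Bf ω ^ 2) ∂μ =
      ⨆ n, ∫⁻ ω, ENNReal.ofReal ((In n ω * Bf ω) ^ 2) ∂μ := by
    rw [lintegral_congr fun ω => hcover ω]
    exact lintegral_iSup' hfn_meas (Filter.Eventually.of_forall hInmono)
  have hfinal : ∀ n, ∫⁻ ω, ENNReal.ofReal ((In n ω * Bf ω) ^ 2) ∂μ ≤ ENNReal.ofReal C := by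
    intro n
    rw [← ofReal_integral_eq_lintegral_ofReal (hmain n).1
      (Filter.Eventually.of_forall fun ω => sq_nonneg _)]
    exact ENNReal.ofReal_le_ofReal (hmain n).2
  show (∫⁻ ω, ENNReal.ofReal (Bf ω ^ 2) ∂μ) < ⊤
  rw [hlim]
  exact lt_of_le_of_lt (iSup_le hfinal) ENNReal.ofReal_lt_top
end
end
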